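/- arXiv:0909.0053 — 5 statements merged into one kernel-verified Lean document; each statement's English description precedes it below -/
import Mathlib

section
/- Let G ∈ 𝔾_π with S ∈ st(G) and let v_k ∈ S̄. Then S ∪ {v_k} ∈ st(G), S ∈ st(R_{S∪{v_k}}(G)), and R_S(G) = R_S(R_{S∪{v_k}}(G)); that is, reducing G over S equals first reducing G over S ∪ {v_k} and then removing the single vertex v_k. -/
open scoped Classical

noncomputable section

/-- A finite weighted digraph with weights in the field `𝕎 = RatFunc ℂ` of complex
rational functions: a finite vertex set together with a weight function, where
weight `0` encodes the absence of an edge (no parallel edges, loops allowed). -/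
structure WDigraph (V : Type*) [Fintype V] [DecidableEq V] where
  verts : Finset V
  w : V → V → RatFunc ℂ

namespace WDigraph

variable {V : Type*} [Fintype V] [DecidableEq V]

/-- Membership in `𝔾`: all edges (nonzero weights) join vertices of `G`. -/
def Wf (G : WDigraph V) : Prop :=
  ∀ u v, G.w u v ≠ 0 → u ∈ G.verts ∧ v ∈ G.verts

/-- `det (M(G) - λ I)` as an element of `𝕎`. -/
def charDet (G : WDigraph V) : RatFunc ℂ :=
  Matrix.det (Matrix.of fun i j : G.verts =>
    G.w i.1 j.1 - if i = j then (RatFunc.X : RatFunc ℂ) else 0)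

/-- The spectrum of `G`: the list (multiset) of complex solutions, with
multiplicity, of `det (M(G,λ) - λ I) = 0`. -/
def spec (G : WDigraph V) : Multiset ℂ := G.charDet.num.roots

/-- Membership in `𝔾_π`: every adjacency matrix entry `p/q` has `π(p/q) = deg p - deg q ≤ 0`. -/
def PiNonpos (G : WDigraph V) : Prop :=
  ∀ u v, (G.w u v).num.degree ≤ (G.w u v).denom.degree

end WDigraph

/-- Two spectra (lists) differ at most by the set `N`: after removing all entries
with values in `N` they agree. -/
def SpecDiffAtMost (s₁ s₂ : Multiset ℂ) (N : Set ℂ) : Prop :=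
  s₁.filter (fun z => z ∉ N) = s₂.filter (fun z => z ∉ N)

variable {V : Type*} [Fintype V] [DecidableEq V]

/-- `S` is a structural set of `G`: `S` is a nonempty subset of the vertices, the
complement of `S` induces no cycles in `ℓ(G)` (i.e. no closed walk through
consecutive-distinct vertices all lying outside `S`), and no loop at a vertex
outside `S` has weight `λ`. -/
def IsStructuralSet (G : WDigraph V) (S : Finset V) : Prop :=
  S.Nonempty ∧ S ⊆ G.verts ∧
    (∀ v, ¬ Relation.TransGen
      (fun a b => a ∈ G.verts ∧ b ∈ G.verts ∧ a ∉ S ∧ b ∉ S ∧ a ≠ b ∧ G.w a b ≠ 0) v v) ∧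
    ∀ v ∈ G.verts, v ∉ S → G.w v v ≠ RatFunc.X

/-- `β` is a branch of `G` from `u` to `v` with respect to `S`: a path or cycle
from `u` to `v` in `G` all of whose interior vertices lie outside `S`. -/
def IsBranch (G : WDigraph V) (S : Finset V) (u v : V) (β : List V) : Prop :=
  u ∈ S ∧ v ∈ S ∧
    ∃ int : List V, β = u :: (int ++ [v]) ∧
      (∀ x ∈ int, x ∈ G.verts ∧ x ∉ S) ∧
      (u :: int).Nodup ∧ v ∉ int ∧
      List.Chain' (fun a b => G.w a b ≠ 0) β

/-- The branch product `𝒫_ω(β)` of a branch `β = v₁, …, v_m`. -/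
def branchProd {V : Type*} (w : V → V → RatFunc ℂ) : List V → RatFunc ℂ
  | [] => 0
  | [_] => 0
  | [a, b] => w a b
  | a :: b :: c :: rest => w a b * branchProd w (b :: c :: rest) / (RatFunc.X - w b b)

/-- The isospectral reduction `R_S(G)`: the graph on vertex set `S` whose weight
from `u` to `v` is the sum of the branch products of all branches from `u` to
`v` with respect to `S`. -/
def WDigraph.reduce (G : WDigraph V) (S : Finset V) : WDigraph V where
  verts := S
  w := fun u v => ∑ᶠ β ∈ {β : List V | IsBranch G S u v β}, branchProd G.w β

/-- The set `N(G;S)`: all `z ∈ ℂ` such that for some vertex `v` of `G` off `S`,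
either `z = ω(e_vv)(z)` or `ω(e_vv)` is undefined at `z`. -/
def NSet (G : WDigraph V) (S : Finset V) : Set ℂ :=
  {z | ∃ v ∈ G.verts, v ∉ S ∧
    ((RatFunc.X - G.w v v).num.eval z = 0 ∨ (G.w v v).denom.eval z = 0)}

/-- Isomorphism of weighted digraphs: a vertex bijection carrying edges to edges
and preserving weights. -/
def WDigraph.Isom {V₁ : Type*} [Fintype V₁] [DecidableEq V₁]
    {V₂ : Type*} [Fintype V₂] [DecidableEq V₂]
    (G : WDigraph V₁) (H : WDigraph V₂) : Prop :=
  ∃ ρ : G.verts ≃ H.verts, ∀ u v : G.verts, H.w (ρ u).1 (ρ v).1 = G.w u.1 v.1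



set_option linter.unusedSectionVars false

attribute [local simp] List.Chain'

section AuxP
variable {V : Type*} [Fintype V] [DecidableEq V]

lemma branchFinite (G : WDigraph V) (S : Finset V) (u v : V) :
    {β : List V | IsBranch G S u v β}.Finite := by
  apply Set.Finite.subset (List.finite_length_le V (Fintype.card V + 1))
  rintro β ⟨-, -, int, rfl, -, hnd, -, -⟩
  have := List.Nodup.length_le_card hnd
  simp at this ⊢; omega

lemma branchProd_cons (w : V → V → RatFunc ℂ) (a b : V) (l : List V) (h : l ≠ []) :
    branchProd w (a :: b :: l) = w a b * branchProd w (b :: l) / (RatFunc.X - w b b) := by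
  cases l with
  | nil => exact absurd rfl h
  | cons c r => rfl

lemma branchProd_split (w : V → V → RatFunc ℂ) (k v : V) :
    ∀ (l : List V) (u : V) (m : List V),
      branchProd w (u :: (l ++ k :: m) ++ [v]) =
        branchProd w (u :: l ++ [k]) * branchProd w (k :: m ++ [v]) / (RatFunc.X - w k k) := by
  intro l
  induction l with
  | nil =>
      intro u m
      rw [show (u :: ([] ++ k :: m) ++ [v]) = u :: k :: (m ++ [v]) by simp]
      rw [branchProd_cons w u k _ (by simp)]
      simp [branchProd]
  | cons b l' ih =>
      intro u m
      rw [show (u :: (b :: l' ++ k :: m) ++ [v]) = u :: b :: ((l' ++ k :: m) ++ [v]) by simp]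
      rw [branchProd_cons w u b _ (by simp)]
      rw [show (b :: ((l' ++ k :: m) ++ [v])) = (b :: (l' ++ k :: m) ++ [v]) by simp, ih b m]
      rw [show (u :: (b :: l') ++ [k]) = u :: b :: (l' ++ [k]) by simp]
      rw [branchProd_cons w u b _ (by simp)]
      rw [show (b :: (l' ++ [k])) = (b :: l' ++ [k]) by simp]
      ring

lemma transGen_of_chain (G : WDigraph V) (S : Finset V) :
    ∀ (l : List V) (a b : V),
      List.Chain' (fun x y => G.w x y ≠ 0) (a :: l ++ [b]) →
      (∀ x ∈ a :: l ++ [b], x ∈ G.verts ∧ x ∉ S) →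
      (a :: l ++ [b]).Nodup →
      Relation.TransGen
        (fun a b => a ∈ G.verts ∧ b ∈ G.verts ∧ a ∉ S ∧ b ∉ S ∧ a ≠ b ∧ G.w a b ≠ 0) a b := by
  intro l
  induction l with
  | nil =>
      intro a b hc hm hnd
      refine Relation.TransGen.single ?_
      have ha := hm a (by simp); have hb := hm b (by simp)
      have hab : a ≠ b := by simp at hnd; tauto
      have : G.w a b ≠ 0 := by simp at hc; exact hc
      exact ⟨ha.1, hb.1, ha.2, hb.2, hab, this⟩
  | cons c l' ih =>
      intro a b hc hm hnd
      have h1 : G.w a c ≠ 0 := by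
        rw [show (a :: (c :: l') ++ [b]) = a :: c :: (l' ++ [b]) by simp] at hc
        exact (List.isChain_cons_cons.mp hc).1
      have ha := hm a (by simp); have hcm := hm c (by simp)
      have hac : a ≠ c := by simp at hnd; tauto
      refine Relation.TransGen.head ⟨ha.1, hcm.1, ha.2, hcm.2, hac, h1⟩ ?_
      apply ih c b
      · rw [show (a :: (c :: l') ++ [b]) = a :: (c :: l' ++ [b]) by simp] at hc
        exact (List.isChain_cons_cons.mp hc).2
      · intro x hx; exact hm x (by simp at hx ⊢; tauto)
      · simp at hnd ⊢; tauto

lemma takeWhile_split (k : V) : ∀ (l r : List V), k ∉ l →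
    ((l ++ k :: r).takeWhile (fun x => x != k) = l ∧
     (l ++ k :: r).dropWhile (fun x => x != k) = k :: r) := by
  intro l
  induction l with
  | nil => intro r _; simp [List.takeWhile, List.dropWhile]
  | cons a l' ih =>
      intro r hk
      have hak : a ≠ k := by simp at hk; tauto
      have := ih r (by simp at hk; tauto)
      simp [List.takeWhile_cons, List.dropWhile_cons, hak, this.1, this.2]

end AuxP

section AuxQ
variable {V : Type*} [Fintype V] [DecidableEq V]

/-- The only possible branch from `k` to `k` w.r.t. `insert k S` is the loop `[k,k]`. -/
lemma loop_branch_eq (G : WDigraph V) (S : Finset V)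
    (hS3 : ∀ v, ¬ Relation.TransGen
      (fun a b => a ∈ G.verts ∧ b ∈ G.verts ∧ a ∉ S ∧ b ∉ S ∧ a ≠ b ∧ G.w a b ≠ 0) v v)
    (k : V) (hk : k ∈ G.verts) (hkS : k ∉ S) :
    {β : List V | IsBranch G (insert k S) k k β} = {β | β = [k, k] ∧ G.w k k ≠ 0} := by
  ext β
  simp only [Set.mem_setOf_eq]
  constructor
  · rintro ⟨-, -, int, rfl, hmem, hnd, hkint, hchain⟩
    cases int with
    | nil =>
        refine ⟨by simp, ?_⟩
        simpa using hchain
    | cons c rest =>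
        exfalso
        have hc := hmem c (by simp)
        have hcT : c ∉ S ∧ c ≠ k := by
          have := hc.2; simp [Finset.mem_insert] at this; tauto
        have hchain' : List.Chain' (fun a b => G.w a b ≠ 0) (k :: c :: (rest ++ [k])) := by
          simpa using hchain
        have h1 : G.w k c ≠ 0 := (List.isChain_cons_cons.mp hchain').1
        have h2 : List.Chain' (fun a b => G.w a b ≠ 0) (c :: rest ++ [k]) := by
          simpa using (List.isChain_cons_cons.mp hchain').2
        have hnd' : (c :: rest ++ [k]).Nodup := by
          show ((c :: rest) ++ [k]).Nodup
          rw [List.nodup_append]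
          refine ⟨(List.nodup_cons.mp hnd).2, List.nodup_singleton k, ?_⟩
          intro x hx y hxk
          simp only [List.mem_singleton] at hxk
          subst hxk; exact fun h => hkint (h ▸ hx)
        have hm : ∀ x ∈ c :: rest ++ [k], x ∈ G.verts ∧ x ∉ S := by
          intro x hx
          rcases (by simpa using hx : x = c ∨ x ∈ rest ∨ x = k) with rfl | hx | rfl
          · exact ⟨hc.1, hcT.1⟩
          · have := hmem x (by simp [hx])
            refine ⟨this.1, fun hxS => this.2 (Finset.mem_insert_of_mem hxS)⟩
          · exact ⟨hk, hkS⟩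
        exact hS3 k (Relation.TransGen.head
          ⟨hk, hc.1, hkS, hcT.1, fun h => hcT.2 h.symm, h1⟩
          (transGen_of_chain G S rest c k h2 hm hnd'))
  · rintro ⟨rfl, hw⟩
    refine ⟨Finset.mem_insert_self k S, Finset.mem_insert_self k S, [], by simp, by simp,
      by simp, by simp, ?_⟩
    simpa using hw

lemma reduce_w_kk (G : WDigraph V) (S : Finset V)
    (hS3 : ∀ v, ¬ Relation.TransGen
      (fun a b => a ∈ G.verts ∧ b ∈ G.verts ∧ a ∉ S ∧ b ∉ S ∧ a ≠ b ∧ G.w a b ≠ 0) v v)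
    (k : V) (hk : k ∈ G.verts) (hkS : k ∉ S) :
    (G.reduce (insert k S)).w k k = G.w k k := by
  show (∑ᶠ β ∈ {β : List V | IsBranch G (insert k S) k k β}, branchProd G.w β) = G.w k k
  rw [loop_branch_eq G S hS3 k hk hkS]
  by_cases hw : G.w k k = 0
  · rw [show {β : List V | β = [k, k] ∧ G.w k k ≠ 0} = ∅ by simp [hw]]
    simp [hw]
  · rw [show {β : List V | β = [k, k] ∧ G.w k k ≠ 0} = {[k, k]} by
      ext; simp [hw]]
    rw [finsum_mem_singleton]
    rfl

end AuxQ

section AuxR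
variable {V : Type*} [Fintype V] [DecidableEq V]

/-- Splitting a branch through `k` into two branches w.r.t. `insert k S`. -/
lemma branch_split (G : WDigraph V) (S : Finset V) (k : V) (hk : k ∈ G.verts) (hkS : k ∉ S)
    (u v : V) (β : List V) (hβ : IsBranch G S u v β) (hkβ : k ∈ β) :
    ∃ int1 int2 : List V,
      β = (u :: int1 ++ [k]) ++ (int2 ++ [v]) ∧
      IsBranch G (insert k S) u k (u :: int1 ++ [k]) ∧
      IsBranch G (insert k S) k v (k :: int2 ++ [v]) := by
  obtain ⟨hu, hv, int, rfl, hmem, hnd, hvint, hchain⟩ := hβ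
  have hku : k ≠ u := fun h => hkS (h ▸ hu)
  have hkv : k ≠ v := fun h => hkS (h ▸ hv)
  have hkint : k ∈ int := by
    rcases (by simpa using hkβ : k = u ∨ k ∈ int ∨ k = v) with h | h | h
    · exact absurd h hku
    · exact h
    · exact absurd h hkv
  obtain ⟨int1, int2, rfl⟩ := List.append_of_mem hkint
  have huint : u ∉ int1 ++ k :: int2 := (List.nodup_cons.mp hnd).1
  have hndint : (int1 ++ k :: int2).Nodup := (List.nodup_cons.mp hnd).2
  have h1 : int1.Nodup := (List.nodup_append.mp hndint).1
  have h2 : (k :: int2).Nodup := (List.nodup_append.mp hndint).2.1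
  have hdisj : int1.Disjoint (k :: int2) := List.disjoint_of_nodup_append hndint
  have hk1 : k ∉ int1 := fun h => hdisj h (by simp)
  have hk2 : k ∉ int2 := (List.nodup_cons.mp h2).1
  refine ⟨int1, int2, by simp, ?_, ?_⟩
  · refine ⟨Finset.mem_insert_of_mem hu, Finset.mem_insert_self k S, int1, by simp, ?_, ?_, ?_, ?_⟩
    · intro x hx
      have := hmem x (by simp [hx])
      refine ⟨this.1, ?_⟩
      simp only [Finset.mem_insert]
      push_neg
      exact ⟨fun h => hk1 (h ▸ hx), this.2⟩
    · exact List.nodup_cons.mpr ⟨fun h => huint (by simp [h]), h1⟩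
    · exact hk1
    · exact hchain.prefix ⟨int2 ++ [v], by simp⟩
  · refine ⟨Finset.mem_insert_self k S, Finset.mem_insert_of_mem hv, int2, by simp, ?_, ?_, ?_, ?_⟩
    · intro x hx
      have := hmem x (by simp [hx])
      refine ⟨this.1, ?_⟩
      simp only [Finset.mem_insert]
      push_neg
      exact ⟨fun h => hk2 (h ▸ hx), this.2⟩
    · exact h2
    · exact fun h => hvint (by simp [h])
    · exact hchain.suffix ⟨u :: int1, by simp⟩

/-- Joining a branch from `u` to `k` with a branch from `k` to `v` (both w.r.t.
`insert k S`) gives a branch from `u` to `v` w.r.t. `S`. -/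
lemma branch_join (G : WDigraph V) (S : Finset V)
    (hS3 : ∀ x, ¬ Relation.TransGen
      (fun a b => a ∈ G.verts ∧ b ∈ G.verts ∧ a ∉ S ∧ b ∉ S ∧ a ≠ b ∧ G.w a b ≠ 0) x x)
    (k : V) (hk : k ∈ G.verts) (hkS : k ∉ S)
    (u v : V) (hu : u ∈ S) (hv : v ∈ S) (β₁ β₂ : List V)
    (hβ₁ : IsBranch G (insert k S) u k β₁) (hβ₂ : IsBranch G (insert k S) k v β₂) :
    IsBranch G S u v (β₁ ++ β₂.tail) ∧ k ∈ β₁ ++ β₂.tail := by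
  obtain ⟨-, -, int1, rfl, hmem1, hnd1, hk1, hchain1⟩ := hβ₁
  obtain ⟨-, -, int2, rfl, hmem2, hnd2, hv2, hchain2⟩ := hβ₂
  have hknd2 : k ∉ int2 := (List.nodup_cons.mp hnd2).1
  have hnd2' : int2.Nodup := (List.nodup_cons.mp hnd2).2
  have hund1 : u ∉ int1 := (List.nodup_cons.mp hnd1).1
  have hnd1' : int1.Nodup := (List.nodup_cons.mp hnd1).2
  have huk : u ≠ k := fun h => hkS (h ▸ hu)
  have hvk : v ≠ k := fun h => hkS (h ▸ hv)
  -- interiors of the two branches are disjoint (else a cycle off `S`)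
  have hdisj : ∀ x, x ∈ int1 → x ∈ int2 → False := by
    intro x hx1 hx2
    obtain ⟨p1, s1, rfl⟩ := List.append_of_mem hx1
    obtain ⟨p2, s2, rfl⟩ := List.append_of_mem hx2
    have hxm := hmem1 x (by simp)
    have hxS : x ∉ S := fun h => hxm.2 (Finset.mem_insert_of_mem h)
    -- TransGen from x to k
    have T1 : Relation.TransGen
        (fun a b => a ∈ G.verts ∧ b ∈ G.verts ∧ a ∉ S ∧ b ∉ S ∧ a ≠ b ∧ G.w a b ≠ 0) x k := by
      apply transGen_of_chain G S s1 x k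
      · exact hchain1.suffix ⟨u :: p1, by simp⟩
      · intro y hy
        rcases (by simpa using hy : y = x ∨ y ∈ s1 ∨ y = k) with rfl | hy | rfl
        · exact ⟨hxm.1, hxS⟩
        · have := hmem1 y (by simp [hy])
          exact ⟨this.1, fun h => this.2 (Finset.mem_insert_of_mem h)⟩
        · exact ⟨hk, hkS⟩
      · have hsub : (x :: s1 ++ [k]).Sublist ((p1 ++ x :: s1) ++ [k]) := by
          apply List.Sublist.append_right
          exact (List.suffix_append p1 (x :: s1)).sublist
        apply List.Nodup.sublist hsub
        rw [List.nodup_append]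
        refine ⟨hnd1', List.nodup_singleton k, ?_⟩
        intro y hy z hyk
        simp only [List.mem_singleton] at hyk
        subst hyk
        exact fun h => hk1 (h ▸ hy)
    -- TransGen from k to x
    have T2 : Relation.TransGen
        (fun a b => a ∈ G.verts ∧ b ∈ G.verts ∧ a ∉ S ∧ b ∉ S ∧ a ≠ b ∧ G.w a b ≠ 0) k x := by
      apply transGen_of_chain G S p2 k x
      · exact hchain2.prefix ⟨s2 ++ [v], by simp⟩
      · intro y hy
        rcases (by simpa using hy : y = k ∨ y ∈ p2 ∨ y = x) with rfl | hy | rfl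
        · exact ⟨hk, hkS⟩
        · have := hmem2 y (by simp [hy])
          exact ⟨this.1, fun h => this.2 (Finset.mem_insert_of_mem h)⟩
        · exact ⟨hxm.1, hxS⟩
      · have hsub : (k :: p2 ++ [x]).Sublist (k :: (p2 ++ x :: s2)) := by
          apply List.Sublist.cons₂
          have : (p2 ++ [x]).Sublist (p2 ++ [x] ++ s2) := List.sublist_append_left _ _
          simpa using this
        exact List.Nodup.sublist hsub hnd2
    exact hS3 x (T1.trans T2)
  have hmem : ∀ x ∈ int1 ++ k :: int2, x ∈ G.verts ∧ x ∉ S := by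
    intro x hx
    rcases (by simpa using hx : x ∈ int1 ∨ x = k ∨ x ∈ int2) with hx | rfl | hx
    · have := hmem1 x hx
      exact ⟨this.1, fun h => this.2 (Finset.mem_insert_of_mem h)⟩
    · exact ⟨hk, hkS⟩
    · have := hmem2 x hx
      exact ⟨this.1, fun h => this.2 (Finset.mem_insert_of_mem h)⟩
  refine ⟨⟨hu, hv, int1 ++ k :: int2, by simp, hmem, ?_, ?_, ?_⟩, by simp⟩
  · -- Nodup (u :: (int1 ++ k :: int2))
    rw [List.nodup_cons]
    constructor
    · intro h
      rcases (by simpa using h : u ∈ int1 ∨ u = k ∨ u ∈ int2) with h | h | h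
      · exact hund1 h
      · exact huk h
      · exact (hmem2 u h).2 (Finset.mem_insert_of_mem hu)
    · rw [List.nodup_append]
      refine ⟨hnd1', hnd2, ?_⟩
      intro y hy z hyk
      rcases (by simpa using hyk : z = k ∨ z ∈ int2) with rfl | hyk
      · exact fun h => hk1 (h ▸ hy)
      · exact fun h => hdisj y hy (h ▸ hyk)
  · -- v not in the interior
    intro h
    rcases (by simpa using h : v ∈ int1 ∨ v = k ∨ v ∈ int2) with h | h | h
    · exact (hmem1 v h).2 (Finset.mem_insert_of_mem hv)
    · exact hvk h
    · exact hv2 h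
  · -- the chain condition
    rw [show (u :: (int1 ++ [k]) ++ (k :: (int2 ++ [v])).tail) = (u :: int1 ++ [k]) ++ (int2 ++ [v]) by simp]
    rw [List.Chain', List.isChain_append]
    refine ⟨hchain1, ?_, ?_⟩
    · exact (List.isChain_cons.mp (by simpa using hchain2)).2
    · intro a ha b hb
      rw [show (u :: int1 ++ [k]) = ((u :: int1) ++ [k]) by simp, List.getLast?_concat] at ha
      simp only [Option.mem_def, Option.some.injEq] at ha
      subst ha
      have := (List.isChain_cons.mp (by simpa using hchain2)).1
      exact this b hb
end AuxR

section AuxS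
variable {V : Type*} [Fintype V] [DecidableEq V]

/-- Branches w.r.t. `S` in a graph whose vertex set is `insert k S`. -/
lemma reduce_branch_set (G' : WDigraph V) (S : Finset V) (k : V)
    (hvk : G'.verts = insert k S) (hkS : k ∉ S) (u v : V) (hu : u ∈ S) (hv : v ∈ S) :
    {β : List V | IsBranch G' S u v β} =
      {β | (β = [u, v] ∧ G'.w u v ≠ 0) ∨
        (β = [u, k, v] ∧ G'.w u k ≠ 0 ∧ G'.w k v ≠ 0)} := by
  have huk : u ≠ k := fun h => hkS (h ▸ hu)
  have hvk' : v ≠ k := fun h => hkS (h ▸ hv)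
  ext β
  simp only [Set.mem_setOf_eq]
  constructor
  · rintro ⟨-, -, int, rfl, hmem, hnd, hvint, hchain⟩
    have hint : ∀ x ∈ int, x = k := by
      intro x hx
      have := hmem x hx
      rw [hvk, Finset.mem_insert] at this
      tauto
    cases int with
    | nil =>
        left
        exact ⟨by simp, by simpa using hchain⟩
    | cons a l =>
        have ha : a = k := hint a (by simp)
        subst ha
        cases l with
        | nil =>
            right
            refine ⟨by simp, ?_, ?_⟩
            · simp only [List.Chain', List.nil_append, List.singleton_append, List.isChain_cons_cons] at hchain
              exact hchain.1
            · simp only [List.Chain', List.nil_append, List.singleton_append, List.isChain_cons_cons] at hchain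
              exact hchain.2.1
        | cons b l2 =>
            exfalso
            have hb : b = a := hint b (by simp)
            have := (List.nodup_cons.mp (List.nodup_cons.mp hnd).2).1
            exact this (by simp [hb])
  · rintro (⟨rfl, hw⟩ | ⟨rfl, hw1, hw2⟩)
    · exact ⟨hu, hv, [], by simp, by simp, by simp, by simp, by simpa using hw⟩
    · refine ⟨hu, hv, [k], by simp, ?_, ?_, ?_, ?_⟩
      · intro x hx
        simp only [List.mem_singleton] at hx
        exact ⟨by rw [hx, hvk]; exact Finset.mem_insert_self k S, fun h => hkS (hx ▸ h)⟩
      · simp [huk]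
      · simp [hvk']
      · simp only [List.Chain', List.singleton_append, List.cons_append, List.nil_append, List.isChain_cons_cons,
          List.isChain_singleton, and_true]
        exact ⟨hw1, hw2⟩

/-- Recovering the two component branches from their join. -/
lemma branch_recover {G : WDigraph V} {S : Finset V} {k u v : V} (hkS : k ∉ S) (hu : u ∈ S)
    {β₁ β₂ : List V} (h1 : IsBranch G (insert k S) u k β₁) (h2 : IsBranch G (insert k S) k v β₂) :
    (β₁ ++ β₂.tail).takeWhile (fun x => x != k) ++ [k] = β₁ ∧
    (β₁ ++ β₂.tail).dropWhile (fun x => x != k) = β₂ := by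
  obtain ⟨-, -, int1, rfl, hmem1, hnd1, hk1, -⟩ := h1
  obtain ⟨-, -, int2, rfl, -, -, -, -⟩ := h2
  have hku : k ∉ u :: int1 := by
    simp only [List.mem_cons]
    rintro (rfl | hmem)
    · exact hkS hu
    · exact hk1 hmem
  have h := takeWhile_split k (u :: int1) (int2 ++ [v]) hku
  constructor
  · rw [show (u :: (int1 ++ [k]) ++ (k :: (int2 ++ [v])).tail)
        = (u :: int1) ++ k :: (int2 ++ [v]) by simp, h.1]
    simp
  · rw [show (u :: (int1 ++ [k]) ++ (k :: (int2 ++ [v])).tail)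
        = (u :: int1) ++ k :: (int2 ++ [v]) by simp, h.2]

end AuxS

/-- (Equation (5) in the proof of Lemma 4.) For `G ∈ 𝔾_π`, `S ∈ st(G)` and
`v_k ∉ S` a vertex of `G`: `S ∪ {v_k} ∈ st(G)`, `S ∈ st(R_{S∪{v_k}}(G))`, and
`R_S(G) = R_S(R_{S∪{v_k}}(G))`. -/
theorem reduce_eq_reduce_reduce_insert
    (G : WDigraph V) (hG : G.Wf) (hpi : G.PiNonpos)
    (S : Finset V) (hS : IsStructuralSet G S)
    (k : V) (hk : k ∈ G.verts) (hkS : k ∉ S) :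
    IsStructuralSet G (insert k S) ∧
      IsStructuralSet (G.reduce (insert k S)) S ∧
      G.reduce S = (G.reduce (insert k S)).reduce S := by
  obtain ⟨hS1, hS2, hS3, hS4⟩ := hS
  have hST : S ⊆ insert k S := Finset.subset_insert k S
  have hwkk : (G.reduce (insert k S)).w k k = G.w k k := reduce_w_kk G S hS3 k hk hkS
  -- Part 1
  have part1 : IsStructuralSet G (insert k S) := by
    refine ⟨Finset.insert_nonempty k S, Finset.insert_subset hk hS2, ?_, ?_⟩
    · intro x hx
      apply hS3 x
      refine Relation.TransGen.mono ?_ _ _ hx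
      rintro a b ⟨h1, h2, h3, h4, h5, h6⟩
      exact ⟨h1, h2, fun h => h3 (hST h), fun h => h4 (hST h), h5, h6⟩
    · intro x hxv hxT
      exact hS4 x hxv fun h => hxT (hST h)
  -- Part 2
  have part2 : IsStructuralSet (G.reduce (insert k S)) S := by
    refine ⟨hS1, hST, ?_, ?_⟩
    · intro x hx
      have hno : ∀ a b : V, ¬(a ∈ (G.reduce (insert k S)).verts ∧
          b ∈ (G.reduce (insert k S)).verts ∧ a ∉ S ∧ b ∉ S ∧ a ≠ b ∧
          (G.reduce (insert k S)).w a b ≠ 0) := by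
        rintro a b ⟨h1, h2, h3, h4, h5, -⟩
        have ha : a = k := by
          have : a ∈ insert k S := h1
          rw [Finset.mem_insert] at this; tauto
        have hb : b = k := by
          have : b ∈ insert k S := h2
          rw [Finset.mem_insert] at this; tauto
        exact h5 (ha.trans hb.symm)
      cases hx with
      | single h => exact hno _ _ h
      | tail _ h => exact hno _ _ h
    · intro x hxv hxS
      have hxk : x = k := by
        have : x ∈ insert k S := hxv
        rw [Finset.mem_insert] at this; tauto
      subst hxk
      rw [hwkk]
      exact hS4 x hk hkS
  refine ⟨part1, part2, ?_⟩
  -- Part 3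
  show WDigraph.mk S _ = WDigraph.mk S _
  congr 1
  funext u v
  show (∑ᶠ β ∈ {β : List V | IsBranch G S u v β}, branchProd G.w β)
      = ∑ᶠ β ∈ {β : List V | IsBranch (G.reduce (insert k S)) S u v β},
          branchProd (G.reduce (insert k S)).w β
  by_cases hu : u ∈ S
  swap
  · rw [show {β : List V | IsBranch G S u v β} = ∅ by
        ext β; simp only [Set.mem_setOf_eq, Set.mem_empty_iff_false, iff_false]
        exact fun h => hu h.1,
      show {β : List V | IsBranch (G.reduce (insert k S)) S u v β} = ∅ by
        ext β; simp only [Set.mem_setOf_eq, Set.mem_empty_iff_false, iff_false]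
        exact fun h => hu h.1]
    simp
  by_cases hv : v ∈ S
  swap
  · rw [show {β : List V | IsBranch G S u v β} = ∅ by
        ext β; simp only [Set.mem_setOf_eq, Set.mem_empty_iff_false, iff_false]
        exact fun h => hv h.2.1,
      show {β : List V | IsBranch (G.reduce (insert k S)) S u v β} = ∅ by
        ext β; simp only [Set.mem_setOf_eq, Set.mem_empty_iff_false, iff_false]
        exact fun h => hv h.2.1]
    simp
  -- main case : u, v ∈ S
  -- RHS computation
  have hRHS : (∑ᶠ β ∈ {β : List V | IsBranch (G.reduce (insert k S)) S u v β},
        branchProd (G.reduce (insert k S)).w β)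
      = (G.reduce (insert k S)).w u v +
        (G.reduce (insert k S)).w u k * (G.reduce (insert k S)).w k v /
          (RatFunc.X - G.w k k) := by
    rw [reduce_branch_set (G.reduce (insert k S)) S k rfl hkS u v hu hv]
    have hval2 : branchProd (G.reduce (insert k S)).w [u, k, v]
        = (G.reduce (insert k S)).w u k * (G.reduce (insert k S)).w k v /
            (RatFunc.X - G.w k k) := by
      show (G.reduce (insert k S)).w u k * branchProd (G.reduce (insert k S)).w [k, v] /
          (RatFunc.X - (G.reduce (insert k S)).w k k) = _
      rw [hwkk]; rfl
    by_cases h1 : (G.reduce (insert k S)).w u v = 0 <;>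
      by_cases h2 : (G.reduce (insert k S)).w u k ≠ 0 ∧ (G.reduce (insert k S)).w k v ≠ 0
    · rw [show {β : List V | (β = [u, v] ∧ (G.reduce (insert k S)).w u v ≠ 0) ∨
          (β = [u, k, v] ∧ (G.reduce (insert k S)).w u k ≠ 0 ∧
            (G.reduce (insert k S)).w k v ≠ 0)} = {[u, k, v]} by
        ext β; simp [h1, h2.1, h2.2]]
      rw [finsum_mem_singleton, hval2, h1, zero_add]
    · have h2' : (G.reduce (insert k S)).w u k = 0 ∨ (G.reduce (insert k S)).w k v = 0 := by
        tauto
      rw [show {β : List V | (β = [u, v] ∧ (G.reduce (insert k S)).w u v ≠ 0) ∨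
          (β = [u, k, v] ∧ (G.reduce (insert k S)).w u k ≠ 0 ∧
            (G.reduce (insert k S)).w k v ≠ 0)} = ∅ by
        ext β; rcases h2' with h | h <;> simp [h1, h]]
      rcases h2' with h | h <;> simp [h1, h]
    · rw [show {β : List V | (β = [u, v] ∧ (G.reduce (insert k S)).w u v ≠ 0) ∨
          (β = [u, k, v] ∧ (G.reduce (insert k S)).w u k ≠ 0 ∧
            (G.reduce (insert k S)).w k v ≠ 0)} = {[u, v], [u, k, v]} by
        ext β; simp [h1, h2.1, h2.2]]
      rw [finsum_mem_pair (by simp), hval2]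
      rfl
    · have h2' : (G.reduce (insert k S)).w u k = 0 ∨ (G.reduce (insert k S)).w k v = 0 := by
        tauto
      rw [show {β : List V | (β = [u, v] ∧ (G.reduce (insert k S)).w u v ≠ 0) ∨
          (β = [u, k, v] ∧ (G.reduce (insert k S)).w u k ≠ 0 ∧
            (G.reduce (insert k S)).w k v ≠ 0)} = {[u, v]} by
        ext β; rcases h2' with h | h <;> simp [h1, h]]
      rw [finsum_mem_singleton]
      rcases h2' with h | h <;> rw [h] <;> simp <;> rfl
  rw [hRHS]
  -- LHS computation
  rw [finsum_mem_eq_finite_toFinset_sum (branchProd G.w) (branchFinite G S u v)]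
  rw [← Finset.sum_filter_add_sum_filter_not (branchFinite G S u v).toFinset
    (fun β => k ∈ β) (branchProd G.w)]
  have h0 : (branchFinite G S u v).toFinset.filter (fun β => k ∉ β)
      = (branchFinite G (insert k S) u v).toFinset := by
    ext β
    simp only [Finset.mem_filter, Set.Finite.mem_toFinset, Set.mem_setOf_eq]
    constructor
    · rintro ⟨⟨-, -, int, rfl, hmem, hnd, hvint, hchain⟩, hkβ⟩
      refine ⟨hST hu, hST hv, int, rfl, ?_, hnd, hvint, hchain⟩
      intro x hx
      have := hmem x hx
      refine ⟨this.1, ?_⟩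
      rw [Finset.mem_insert]
      push_neg
      exact ⟨fun h => hkβ (by simp [← h, hx]), this.2⟩
    · rintro ⟨-, -, int, rfl, hmem, hnd, hvint, hchain⟩
      have hx' : ∀ x ∈ int, x ∈ G.verts ∧ x ∉ S := fun x hx =>
        ⟨(hmem x hx).1, fun h => (hmem x hx).2 (hST h)⟩
      refine ⟨⟨hu, hv, int, rfl, hx', hnd, hvint, hchain⟩, ?_⟩
      intro hkβ
      rcases (by simpa using hkβ : k = u ∨ k ∈ int ∨ k = v) with rfl | h | rfl
      · exact hkS hu
      · exact (hmem k h).2 (Finset.mem_insert_self k S)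
      · exact hkS hv
  have h1 : (branchFinite G S u v).toFinset.filter (fun β => k ∈ β)
      = ((branchFinite G (insert k S) u k).toFinset ×ˢ
          (branchFinite G (insert k S) k v).toFinset).image
          (fun p : List V × List V => p.1 ++ p.2.tail) := by
    ext β
    simp only [Finset.mem_filter, Set.Finite.mem_toFinset, Set.mem_setOf_eq,
      Finset.mem_image, Finset.mem_product]
    constructor
    · rintro ⟨hβ, hkβ⟩
      obtain ⟨int1, int2, heq, hb1, hb2⟩ := branch_split G S k hk hkS u v β hβ hkβ
      exact ⟨(u :: int1 ++ [k], k :: int2 ++ [v]), ⟨hb1, hb2⟩, by rw [heq]; simp⟩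
    · rintro ⟨⟨β₁, β₂⟩, ⟨hb1, hb2⟩, rfl⟩
      exact branch_join G S hS3 k hk hkS u v hu hv β₁ β₂ hb1 hb2
  rw [h0, h1]
  rw [Finset.sum_image (by
    rintro ⟨p1, p2⟩ hp ⟨q1, q2⟩ hq heq
    beta_reduce at heq
    simp only [Finset.mem_coe, Finset.mem_product, Set.Finite.mem_toFinset, Set.mem_setOf_eq] at hp hq
    have Hp := branch_recover hkS hu hp.1 hp.2
    have Hq := branch_recover hkS hu hq.1 hq.2
    have e1 : p1 = q1 := by rw [← Hp.1, ← Hq.1, heq]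
    have e2 : p2 = q2 := by rw [← Hp.2, ← Hq.2, heq]
    simp [e1, e2])]
  have hval : ∀ p ∈ (branchFinite G (insert k S) u k).toFinset ×ˢ
      (branchFinite G (insert k S) k v).toFinset,
      branchProd G.w (p.1 ++ p.2.tail)
        = branchProd G.w p.1 * branchProd G.w p.2 / (RatFunc.X - G.w k k) := by
    rintro ⟨β₁, β₂⟩ hp
    simp only [Finset.mem_product, Set.Finite.mem_toFinset, Set.mem_setOf_eq] at hp
    obtain ⟨-, -, int1, rfl, -, -, -, -⟩ := hp.1
    obtain ⟨-, -, int2, rfl, -, -, -, -⟩ := hp.2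
    rw [show (u :: (int1 ++ [k]) ++ (k :: (int2 ++ [v])).tail)
        = u :: (int1 ++ k :: int2) ++ [v] by simp]
    exact branchProd_split G.w k v int1 u int2
  rw [Finset.sum_congr rfl hval]
  have hprod : ∑ p ∈ (branchFinite G (insert k S) u k).toFinset ×ˢ
        (branchFinite G (insert k S) k v).toFinset,
        branchProd G.w p.1 * branchProd G.w p.2 / (RatFunc.X - G.w k k)
      = (∑ β ∈ (branchFinite G (insert k S) u k).toFinset, branchProd G.w β) *
          (∑ β ∈ (branchFinite G (insert k S) k v).toFinset, branchProd G.w β) /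
          (RatFunc.X - G.w k k) := by
    rw [Finset.sum_mul_sum, Finset.sum_div]
    rw [Finset.sum_product]
    refine Finset.sum_congr rfl fun a _ => ?_
    rw [Finset.sum_div]
  rw [hprod]
  have huk' : ∑ β ∈ (branchFinite G (insert k S) u k).toFinset, branchProd G.w β
      = (G.reduce (insert k S)).w u k :=
    (finsum_mem_eq_finite_toFinset_sum (branchProd G.w) (branchFinite G (insert k S) u k)).symm
  have hkv' : ∑ β ∈ (branchFinite G (insert k S) k v).toFinset, branchProd G.w β
      = (G.reduce (insert k S)).w k v :=
    (finsum_mem_eq_finite_toFinset_sum (branchProd G.w) (branchFinite G (insert k S) k v)).symm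
  have huv' : ∑ β ∈ (branchFinite G (insert k S) u v).toFinset, branchProd G.w β
      = (G.reduce (insert k S)).w u v :=
    (finsum_mem_eq_finite_toFinset_sum (branchProd G.w) (branchFinite G (insert k S) u v)).symm
  rw [huk', hkv', huv']
  ring
end
end

section
/- Let G = (V,E,ω) be a graph in 𝔾_π with S ∈ st(G), V = {v₁,…,v_n}, and S̄ = {v_k,…,v_n} where 2 ≤ k ≤ n. Then for any permutation ρ of {k,…,n}, R_S(G) = R̄(G; v_{ρ(k)},…,v_{ρ(n)}); i.e., the reduction over S can be accomplished by sequentially removing the vertices of S̄ one at a time in any order. -/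
open scoped Classical

noncomputable section

variable {V : Type*} [Fintype V] [DecidableEq V]

/-- `R̄(G; v₁,…,v_i)`: sequential removal of single vertices, where
`R̄(G;v) = R_{V∖{v}}(G)`. -/
def removeSeq (G : WDigraph V) : List V → WDigraph V
  | [] => G
  | v :: rest => removeSeq (G.reduce (G.verts.erase v)) rest


namespace Lemma4Aux

variable {V : Type*} [Fintype V] [DecidableEq V]

lemma branchProd_cons_cons {V : Type*} (w : V → V → RatFunc ℂ) (a b c : V) (rest : List V) :
    branchProd w (a :: b :: c :: rest)
      = w a b * branchProd w (b :: c :: rest) / (RatFunc.X - w b b) := rfl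

lemma branchProd_zero_of_not_chain {V : Type*} (w : V → V → RatFunc ℂ) :
    ∀ l : List V, ¬ List.Chain' (fun a b => w a b ≠ 0) l → branchProd w l = 0
  | [], h => by simp [List.Chain'] at h
  | [a], h => by simp [List.Chain'] at h
  | [a, b], h => by
      simp only [List.Chain', List.isChain_cons_cons, List.isChain_singleton, and_true, not_not] at h
      simpa [branchProd] using h
  | a :: b :: c :: rest, h => by
      rw [List.Chain', List.isChain_cons_cons] at h
      rw [branchProd_cons_cons]
      by_cases hab : w a b = 0
      · simp [hab]
      · have hc : ¬ List.Chain' (fun a b => w a b ≠ 0) (b :: c :: rest) :=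
          fun hc => h ⟨hab, hc⟩
        rw [branchProd_zero_of_not_chain w _ hc]
        simp

lemma branchProd_congr {V : Type*} {w₁ w₂ : V → V → RatFunc ℂ} :
    ∀ l : List V, (∀ a ∈ l, ∀ b ∈ l, w₁ a b = w₂ a b) →
      branchProd w₁ l = branchProd w₂ l
  | [], _ => rfl
  | [a], _ => rfl
  | [a, b], h => by
      simp [branchProd, h a (by simp) b (by simp)]
  | a :: b :: c :: rest, h => by
      rw [branchProd_cons_cons, branchProd_cons_cons,
        h a (by simp) b (by simp), h b (by simp) b (by simp),
        branchProd_congr (b :: c :: rest)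
          (fun x hx y hy => h x (List.mem_cons_of_mem _ hx) y (List.mem_cons_of_mem _ hy))]

/-- Sum of branch products over all single insertions of `v` strictly inside `a :: xs`. -/
def insSum {V : Type*} (w : V → V → RatFunc ℂ) (v : V) : V → List V → RatFunc ℂ
  | _, [] => 0
  | a, b :: ys =>
      branchProd w (a :: v :: b :: ys) + w a b * insSum w v b ys / (RatFunc.X - w b b)

lemma insSum_eq_sum {V : Type*} (w : V → V → RatFunc ℂ) (v : V) :
    ∀ (xs : List V) (a : V), insSum w v a xs
      = ∑ j ∈ Finset.range xs.length, branchProd w (a :: xs.insertIdx j v)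
  | [], a => by simp [insSum]
  | b :: ys, a => by
      simp only [List.length_cons]
      rw [Finset.sum_range_succ', insSum, insSum_eq_sum w v ys b, Finset.mul_sum,
        Finset.sum_div, add_comm]
      simp only [List.insertIdx_succ_cons, List.insertIdx_zero]
      congr 1
      refine Finset.sum_congr rfl fun j hj => ?_
      rw [Finset.mem_range] at hj
      obtain ⟨z, zs, hz⟩ := List.exists_cons_of_ne_nil
        (l := ys.insertIdx j v) (by
          have hlen : (ys.insertIdx j v).length = ys.length + 1 :=
            List.length_insertIdx_of_le_length (by omega) v
          intro h; rw [h] at hlen; simp at hlen)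
      rw [hz, branchProd_cons_cons, mul_div_assoc]

/-- The loop-free edge relation outside `S`. -/
def EdgeRel (G : WDigraph V) (S : Finset V) (a b : V) : Prop :=
  a ∈ G.verts ∧ b ∈ G.verts ∧ a ∉ S ∧ b ∉ S ∧ a ≠ b ∧ G.w a b ≠ 0

lemma noCycle {G : WDigraph V} {S : Finset V} (hS : IsStructuralSet G S) :
    ∀ x, ¬ Relation.TransGen (EdgeRel G S) x x := hS.2.2.1

variable {G : WDigraph V} {S : Finset V} {v : V}

lemma rel_of_edge (hG : G.Wf) {a b : V} (ha : a ∉ S) (hb : b ∉ S) (hab : a ≠ b)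
    (hw : G.w a b ≠ 0) : EdgeRel G S a b :=
  ⟨(hG a b hw).1, (hG a b hw).2, ha, hb, hab, hw⟩

lemma loop_prod_zero (hG : G.Wf) (hS : IsStructuralSet G S) (hvS : v ∉ S)
    {b : V} (hbS : b ∉ S) (hbv : b ≠ v) : G.w b v * G.w v b = 0 := by
  by_cases h1 : G.w b v = 0
  · simp [h1]
  by_cases h2 : G.w v b = 0
  · simp [h2]
  exact absurd ((Relation.TransGen.single (rel_of_edge hG hbS hvS hbv h1)).trans
    (Relation.TransGen.single (rel_of_edge hG hvS hbS (Ne.symm hbv) h2)))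
    (noCycle hS b)

lemma insSum_eq_zero (hG : G.Wf) (hS : IsStructuralSet G S) (hv : v ∈ G.verts) (hvS : v ∉ S) :
    ∀ (ys : List V) (b : V), Relation.TransGen (EdgeRel G S) v b →
      b ∉ S → b ≠ v → (∀ x ∈ ys.dropLast, x ∉ S ∧ x ≠ v) →
      List.Chain' (· ≠ ·) (b :: ys) →
      insSum G.w v b ys = 0
  | [], b, _, _, _, _, _ => rfl
  | c :: zs, b, htb, hbS, hbv, hdrop, hchain => by
      rw [insSum]
      have h1 : branchProd G.w (b :: v :: c :: zs) = 0 := by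
        rw [branchProd_cons_cons]
        have hbv0 : G.w b v = 0 := by
          by_contra h
          exact noCycle hS v
            (htb.trans (Relation.TransGen.single (rel_of_edge hG hbS hvS hbv h)))
        simp [hbv0]
      rw [h1, zero_add]
      rcases zs with _ | ⟨d, ds⟩
      · rw [insSum]; simp
      · by_cases hbc : G.w b c = 0
        · simp [hbc]
        · have hc : c ∉ S ∧ c ≠ v :=
            hdrop c (by rw [List.dropLast_cons₂]; exact List.mem_cons_self)
          have hne : b ≠ c := (List.isChain_cons_cons.mp hchain).1
          have hTc : Relation.TransGen (EdgeRel G S) v c :=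
            htb.trans (Relation.TransGen.single (rel_of_edge hG hbS hc.1 hne hbc))
          rw [insSum_eq_zero hG hS hv hvS (d :: ds) c hTc hc.1 hc.2
            (by
              intro x hx
              apply hdrop
              rw [List.dropLast_cons₂, List.mem_cons]; right; exact hx)
            ((List.isChain_cons_cons.mp hchain).2)]
          simp

/-- The key single-branch expansion identity. -/
lemma branchProd_f_eq (hG : G.Wf) (hS : IsStructuralSet G S) (hv : v ∈ G.verts) (hvS : v ∉ S) :
    ∀ (xs : List V) (a : V), xs ≠ [] →
      (∀ x ∈ xs.dropLast, x ∉ S ∧ x ≠ v) →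
      List.Chain' (· ≠ ·) xs →
      branchProd (fun a b => G.w a b + G.w a v * G.w v b / (RatFunc.X - G.w v v)) (a :: xs)
        = branchProd G.w (a :: xs) + insSum G.w v a xs
  | [], _, h, _, _ => absurd rfl h
  | [b], a, _, _, _ => by
      simp only [branchProd, insSum]
      ring
  | b :: c :: zs, a, _, hdrop, hchain => by
      have hb : b ∉ S ∧ b ≠ v := hdrop b (by rw [List.dropLast_cons₂]; exact List.mem_cons_self)
      have hIH := branchProd_f_eq hG hS hv hvS (c :: zs) b (by simp)
        (by
          intro x hx
          apply hdrop
          rw [List.dropLast_cons₂, List.mem_cons]; right; exact hx)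
        ((List.isChain_cons_cons.mp hchain).2)
      rw [branchProd_cons_cons, hIH]
      have hfbb : G.w b b + G.w b v * G.w v b / (RatFunc.X - G.w v v) = G.w b b := by
        rw [loop_prod_zero hG hS hvS hb.1 hb.2]; simp
      rw [hfbb]
      have hrhs : branchProd G.w (a :: b :: c :: zs) + insSum G.w v a (b :: c :: zs)
          = G.w a b * branchProd G.w (b :: c :: zs) / (RatFunc.X - G.w b b)
            + (G.w a v * (G.w v b * branchProd G.w (b :: c :: zs) / (RatFunc.X - G.w b b))
                / (RatFunc.X - G.w v v)
              + G.w a b * insSum G.w v b (c :: zs) / (RatFunc.X - G.w b b)) := by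
        rw [insSum, branchProd_cons_cons G.w a b c zs, branchProd_cons_cons G.w a v b (c :: zs),
          branchProd_cons_cons G.w v b c zs]
      rw [hrhs]
      by_cases hvb : G.w v b = 0
      · rw [hvb]
        simp only [div_eq_mul_inv]; ring
      · have hI : insSum G.w v b (c :: zs) = 0 := by
          refine insSum_eq_zero hG hS hv hvS (c :: zs) b
            (Relation.TransGen.single (rel_of_edge hG hvS hb.1 (Ne.symm hb.2) hvb))
            hb.1 hb.2 ?_ hchain
          intro x hx
          apply hdrop
          rw [List.dropLast_cons₂, List.mem_cons]; right; exact hx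
        rw [hI]
        simp only [div_eq_mul_inv]; ring


/-- Branches without the edge-nonvanishing condition. -/
def Skel (G : WDigraph V) (S : Finset V) (u u' : V) : Set (List V) :=
  {β | u ∈ S ∧ u' ∈ S ∧ ∃ int : List V, β = u :: (int ++ [u']) ∧
    (∀ x ∈ int, x ∈ G.verts ∧ x ∉ S) ∧ (u :: int).Nodup ∧ u' ∉ int}

lemma isBranch_iff {G : WDigraph V} {S : Finset V} {u u' : V} {β : List V} :
    IsBranch G S u u' β ↔
      β ∈ Skel G S u u' ∧ List.Chain' (fun a b => G.w a b ≠ 0) β := by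
  constructor
  · rintro ⟨h1, h2, int, rfl, h3, h4, h5, h6⟩
    exact ⟨⟨h1, h2, int, rfl, h3, h4, h5⟩, h6⟩
  · rintro ⟨⟨h1, h2, int, rfl, h3, h4, h5⟩, h6⟩
    exact ⟨h1, h2, int, rfl, h3, h4, h5, h6⟩

lemma nodup_finite : ({l : List V | l.Nodup}).Finite := by
  have : {l : List V | l.Nodup} = Set.range (fun s : {l : List V // l.Nodup} => (s : List V)) := by
    ext l
    simp only [Set.mem_setOf_eq, Set.mem_range]
    exact ⟨fun h => ⟨⟨l, h⟩, rfl⟩, fun ⟨s, hs⟩ => hs ▸ s.2⟩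
  rw [this]
  exact Set.finite_range _

lemma skel_finite (G : WDigraph V) (S : Finset V) (u u' : V) : (Skel G S u u').Finite := by
  refine ((nodup_finite.image (fun l : List V => u :: (l ++ [u']))).subset ?_)
  rintro β ⟨h1, h2, int, rfl, h3, h4, h5⟩
  exact ⟨int, h4.of_cons, rfl⟩

lemma reduce_w (G : WDigraph V) (S : Finset V) (u u' : V) :
    (G.reduce S).w u u'
      = ∑ β ∈ (skel_finite G S u u').toFinset, branchProd G.w β := by
  show ∑ᶠ β ∈ {β : List V | IsBranch G S u u' β}, branchProd G.w β = _
  have hsub : {β : List V | IsBranch G S u u' β} ⊆ Skel G S u u' :=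
    fun β hβ => (isBranch_iff.mp hβ).1
  have hfin : ({β : List V | IsBranch G S u u' β}).Finite :=
    (skel_finite G S u u').subset hsub
  rw [finsum_mem_eq_finite_toFinset_sum _ hfin]
  refine Finset.sum_subset ?_ ?_
  · intro β hβ
    rw [Set.Finite.mem_toFinset] at *
    exact hsub hβ
  · intro β hβ hnβ
    rw [Set.Finite.mem_toFinset] at *
    refine branchProd_zero_of_not_chain _ _ (fun hc => hnβ ?_)
    exact isBranch_iff.mpr ⟨hβ, hc⟩

lemma finsum_mem_pair_subset {ι M : Type*} [AddCommMonoid M] {x y : ι} (hxy : x ≠ y)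
    {A : Set ι} (hA : A ⊆ {x, y}) (g : ι → M) :
    ∑ᶠ i ∈ A, g i = (if x ∈ A then g x else 0) + (if y ∈ A then g y else 0) := by
  classical
  have hfin : A.Finite := ((Set.finite_singleton y).insert x).subset hA
  have hEq : hfin.toFinset = ({x, y} : Finset ι).filter (· ∈ A) := by
    ext i
    simp only [Set.Finite.mem_toFinset, Finset.mem_filter, Finset.mem_insert,
      Finset.mem_singleton]
    exact ⟨fun h => ⟨by simpa using hA h, h⟩, fun h => h.2⟩
  rw [finsum_mem_eq_finite_toFinset_sum _ hfin, hEq, Finset.sum_filter,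
    Finset.sum_pair hxy]

lemma nodup_all_eq {v : V} : ∀ {l : List V}, l.Nodup → (∀ x ∈ l, x = v) →
    l = [] ∨ l = [v]
  | [], _, _ => Or.inl rfl
  | c :: cs, hnd, hall => by
    right
    have hc : c = v := hall c (List.mem_cons_self)
    have : cs = [] := by
      rcases cs with _ | ⟨d, ds⟩
      · rfl
      · exfalso
        have hd : d = v := hall d (by simp)
        have := List.nodup_cons.mp hnd
        exact this.1 (by rw [hc, ← hd]; simp)
    rw [this, hc]

lemma remove_one_w (G : WDigraph V) {v : V} (hv : v ∈ G.verts) {a b : V}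
    (ha : a ∈ G.verts.erase v) (hb : b ∈ G.verts.erase v) :
    (G.reduce (G.verts.erase v)).w a b
      = G.w a b + G.w a v * G.w v b / (RatFunc.X - G.w v v) := by
  set S' := G.verts.erase v with hS'
  have hav : a ≠ v := (Finset.mem_erase.mp ha).1
  have hbv : b ≠ v := (Finset.mem_erase.mp hb).1
  have hvS' : v ∉ S' := Finset.notMem_erase v G.verts
  show ∑ᶠ β ∈ {β : List V | IsBranch G S' a b β}, branchProd G.w β = _
  have hxy : ([a, b] : List V) ≠ [a, v, b] := by
    intro h; simp at h
  have hsub : {β : List V | IsBranch G S' a b β} ⊆ {[a, b], [a, v, b]} := by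
    rintro β ⟨h1, h2, int, rfl, h3, h4, h5, h6⟩
    have hall : ∀ x ∈ int, x = v := by
      intro x hx
      have := h3 x hx
      by_contra hne
      exact this.2 (Finset.mem_erase.mpr ⟨hne, this.1⟩)
    rcases nodup_all_eq (List.Nodup.of_cons h4) hall with h | h <;> rw [h] <;> simp
  rw [finsum_mem_pair_subset hxy hsub]
  have e1 : (if ([a, b] : List V) ∈ {β : List V | IsBranch G S' a b β}
      then branchProd G.w [a, b] else 0) = G.w a b := by
    split_ifs with h
    · rfl
    · symm
      by_contra hw
      exact h ⟨ha, hb, [], rfl, by simp, by simp [hav], by simp, by simp [List.Chain', hw]⟩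
  have e2 : (if ([a, v, b] : List V) ∈ {β : List V | IsBranch G S' a b β}
      then branchProd G.w [a, v, b] else 0)
      = G.w a v * G.w v b / (RatFunc.X - G.w v v) := by
    split_ifs with h
    · rfl
    · symm
      by_cases h1 : G.w a v = 0
      · simp [h1]
      by_cases h2 : G.w v b = 0
      · simp [h2]
      exact absurd ⟨ha, hb, [v], rfl, by simp [hv, hvS'], by simp [hav], by simp [hbv],
        by simp [List.Chain', h1, h2]⟩ h
  rw [e1, e2]

section ListLemmas
variable {α : Type*}

lemma perm_insertIdx (v : α) : ∀ (j : ℕ) (l : List α), j ≤ l.length →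
    (l.insertIdx j v).Perm (v :: l)
  | 0, l, _ => by simp
  | j + 1, [], h => absurd h (by simp)
  | j + 1, a :: l, h => by
      rw [List.insertIdx_succ_cons]
      exact ((perm_insertIdx v j l (by simpa using h)).cons a).trans (List.Perm.swap v a l)

lemma insertIdx_append_left (v : α) : ∀ (j : ℕ) (l₁ l₂ : List α), j ≤ l₁.length →
    (l₁ ++ l₂).insertIdx j v = l₁.insertIdx j v ++ l₂
  | 0, l₁, l₂, _ => rfl
  | j + 1, [], _, h => absurd h (by simp)
  | j + 1, a :: l₁, l₂, h => by
      simp only [List.cons_append, List.insertIdx_succ_cons,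
        insertIdx_append_left v j l₁ l₂ (by simpa using h)]

variable [DecidableEq α]

lemma indexOf_insertIdx (v : α) : ∀ (j : ℕ) (l : List α), j ≤ l.length → v ∉ l →
    (l.insertIdx j v).idxOf v = j
  | 0, l, _, _ => by simp
  | j + 1, [], h, _ => absurd h (by simp)
  | j + 1, a :: l, h, hv => by
      rw [List.insertIdx_succ_cons,
        List.idxOf_cons_ne _ (fun e => hv (by simp [← e])),
        indexOf_insertIdx v j l (by simpa using h) (fun e => hv (by simp [e]))]

lemma insertIdx_indexOf_eraseIdx (v : α) : ∀ (l : List α), v ∈ l →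
    (l.eraseIdx (l.idxOf v)).insertIdx (l.idxOf v) v = l
  | a :: l, hv => by
      by_cases h : a = v
      · subst h; simp
      · have hv' : v ∈ l := by
          rcases List.mem_cons.mp hv with h' | h'
          · exact absurd h'.symm h
          · exact h'
        rw [List.idxOf_cons_ne _ h, List.eraseIdx_cons_succ, List.insertIdx_succ_cons,
          insertIdx_indexOf_eraseIdx v l hv']

lemma not_mem_eraseIdx_indexOf (v : α) : ∀ (l : List α), l.Nodup → v ∈ l →
    v ∉ l.eraseIdx (l.idxOf v)
  | a :: l, hnd, hv => by
      by_cases h : a = v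
      · subst h; simpa using (List.nodup_cons.mp hnd).1
      · have hv' : v ∈ l := by
          rcases List.mem_cons.mp hv with h' | h'
          · exact absurd h'.symm h
          · exact h'
        rw [List.idxOf_cons_ne _ h, List.eraseIdx_cons_succ]
        intro hmem
        rcases List.mem_cons.mp hmem with h' | h'
        · exact h h'.symm
        · exact not_mem_eraseIdx_indexOf v l (List.nodup_cons.mp hnd).2 hv' h'

lemma dropLast_append_singleton (l : List α) (a : α) : (l ++ [a]).dropLast = l := by
  simp

end ListLemmas

lemma reduce_w_eq_zero (G : WDigraph V) (S : Finset V) (u u' : V) (h : u ∉ S ∨ u' ∉ S) :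
    (G.reduce S).w u u' = 0 := by
  show ∑ᶠ β ∈ {β : List V | IsBranch G S u u' β}, branchProd G.w β = 0
  have he : {β : List V | IsBranch G S u u' β} = ∅ := by
    ext β
    simp only [Set.mem_setOf_eq, Set.mem_empty_iff_false, iff_false]
    rintro ⟨h1, h2, -⟩
    rcases h with h | h
    · exact h h1
    · exact h h2
  rw [he, finsum_mem_empty]

lemma reduce_reduce_w {G : WDigraph V} {S : Finset V} {v : V}
    (hG : G.Wf) (hS : IsStructuralSet G S) (hv : v ∈ G.verts) (hvS : v ∉ S) (u u' : V) :
    (G.reduce S).w u u' = ((G.reduce (G.verts.erase v)).reduce S).w u u' := by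
  set H := G.reduce (G.verts.erase v) with hHdef
  by_cases huS : u ∈ S
  swap
  · rw [reduce_w_eq_zero _ _ _ _ (Or.inl huS), reduce_w_eq_zero _ _ _ _ (Or.inl huS)]
  by_cases huS' : u' ∈ S
  swap
  · rw [reduce_w_eq_zero _ _ _ _ (Or.inr huS'), reduce_w_eq_zero _ _ _ _ (Or.inr huS')]
  have hvu : u ≠ v := fun e => hvS (e ▸ huS)
  have hvu' : u' ≠ v := fun e => hvS (e ▸ huS')
  have hSsub : ∀ x ∈ S, x ∈ G.verts.erase v :=
    fun x hx => Finset.mem_erase.mpr ⟨fun e => hvS (e ▸ hx), hS.2.1 hx⟩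
  have hHverts : H.verts = G.verts.erase v := rfl
  rw [reduce_w, reduce_w]
  set KG := (skel_finite G S u u').toFinset with hKG
  set KH := (skel_finite H S u u').toFinset with hKH
  -- Step 1 : rewrite the right-hand side branch products
  have hstep1 : ∀ γ ∈ KH, branchProd H.w γ
      = branchProd G.w γ + insSum G.w v u γ.tail := by
    intro γ hγ
    obtain ⟨-, -, int, rfl, hint, hnd, hni⟩ := (skel_finite H S u u').mem_toFinset.mp hγ
    have hintv : ∀ x ∈ int, x ∈ G.verts ∧ x ∉ S ∧ x ≠ v := by
      intro x hx
      obtain ⟨hx1, hx2⟩ := hint x hx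
      rw [hHverts, Finset.mem_erase] at hx1
      exact ⟨hx1.2, hx2, hx1.1⟩
    have hcongr : branchProd H.w (u :: (int ++ [u'])) =
        branchProd (fun a b => G.w a b + G.w a v * G.w v b / (RatFunc.X - G.w v v))
          (u :: (int ++ [u'])) := by
      apply branchProd_congr
      intro a ha b hb
      have hmem : ∀ x ∈ u :: (int ++ [u']), x ∈ G.verts.erase v := by
        intro x hx
        rcases List.mem_cons.mp hx with rfl | hx
        · exact hSsub x huS
        · rcases List.mem_append.mp hx with hx | hx
          · obtain ⟨h1, h2, h3⟩ := hintv x hx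
            exact Finset.mem_erase.mpr ⟨h3, h1⟩
          · rw [List.mem_singleton.mp hx]; exact hSsub u' huS'
      exact remove_one_w G hv (hmem a ha) (hmem b hb)
    rw [hcongr, List.tail_cons]
    apply branchProd_f_eq hG hS hv hvS
    · simp
    · intro x hx
      rw [dropLast_append_singleton] at hx
      exact ⟨(hintv x hx).2.1, (hintv x hx).2.2⟩
    · have hnodup : (int ++ [u']).Nodup := by
        rw [List.nodup_append]
        exact ⟨hnd.of_cons, List.nodup_singleton u',
          fun x hx y hy e => hni ((List.mem_singleton.mp hy) ▸ e ▸ hx)⟩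
      exact List.Pairwise.isChain hnodup
  rw [Finset.sum_congr rfl hstep1, Finset.sum_add_distrib]
  -- Step 2 : split the left-hand side
  rw [← Finset.sum_filter_add_sum_filter_not KG (fun β => v ∈ β) (branchProd G.w)]
  -- Step 3 : the part avoiding v is exactly KH
  have hflt : KG.filter (fun β => ¬ v ∈ β) = KH := by
    ext γ
    rw [Finset.mem_filter, hKG, hKH, Set.Finite.mem_toFinset, Set.Finite.mem_toFinset]
    constructor
    · rintro ⟨⟨-, -, int, rfl, hint, hnd, hni⟩, hvm⟩
      refine ⟨huS, huS', int, rfl, fun x hx => ⟨?_, (hint x hx).2⟩, hnd, hni⟩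
      rw [hHverts, Finset.mem_erase]
      exact ⟨fun e => hvm (List.mem_cons_of_mem _ (List.mem_append_left _ (e ▸ hx))),
        (hint x hx).1⟩
    · rintro ⟨-, -, int, rfl, hint, hnd, hni⟩
      have hintv : ∀ x ∈ int, x ∈ G.verts ∧ x ∉ S := by
        intro x hx
        obtain ⟨hx1, hx2⟩ := hint x hx
        rw [hHverts, Finset.mem_erase] at hx1
        exact ⟨hx1.2, hx2⟩
      refine ⟨⟨huS, huS', int, rfl, hintv, hnd, hni⟩, ?_⟩
      intro hvm
      rcases List.mem_cons.mp hvm with e | hvm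
      · exact hvu e.symm
      rcases List.mem_append.mp hvm with hvm | hvm
      · have := (hint v hvm).1
        rw [hHverts] at this
        exact Finset.notMem_erase v G.verts this
      · exact hvu' (List.mem_singleton.mp hvm).symm
  rw [hflt]
  -- Step 4 : the part through v
  have hsum1 : ∑ β ∈ KG.filter (fun β => v ∈ β), branchProd G.w β
      = ∑ γ ∈ KH, insSum G.w v u γ.tail := by
    have h2 : ∀ γ ∈ KH, insSum G.w v u γ.tail
        = ∑ j ∈ Finset.range (γ.tail.dropLast.length + 1),
            branchProd G.w (u :: (γ.tail.dropLast.insertIdx j v ++ [u'])) := by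
      intro γ hγ
      obtain ⟨-, -, int, rfl, hint, hnd, hni⟩ := (skel_finite H S u u').mem_toFinset.mp hγ
      rw [List.tail_cons, insSum_eq_sum, dropLast_append_singleton,
        List.length_append, List.length_singleton]
      refine Finset.sum_congr rfl fun j hj => ?_
      rw [Finset.mem_range] at hj
      rw [insertIdx_append_left v j int [u'] (by omega)]
    rw [Finset.sum_congr rfl h2, Finset.sum_sigma']
    refine Finset.sum_nbij'
      (fun β => ⟨u :: (β.tail.dropLast.eraseIdx (β.tail.dropLast.idxOf v) ++ [u']),
        β.tail.dropLast.idxOf v⟩)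
      (fun p => u :: (p.1.tail.dropLast.insertIdx p.2 v ++ [u'])) ?_ ?_ ?_ ?_ ?_
    · -- forward membership
      intro β hβ
      rw [Finset.mem_filter, hKG, Set.Finite.mem_toFinset] at hβ
      obtain ⟨⟨-, -, int, rfl, hint, hnd, hni⟩, hvm⟩ := hβ
      have hvint : v ∈ int := by
        rcases List.mem_cons.mp hvm with e | hvm'
        · exact absurd e.symm hvu
        rcases List.mem_append.mp hvm' with h | h
        · exact h
        · exact absurd (List.mem_singleton.mp h).symm hvu'
      simp only [List.tail_cons, dropLast_append_singleton]
      set k := int.idxOf v with hk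
      have hklt : k < int.length := List.idxOf_lt_length_iff.mpr hvint
      set int' := int.eraseIdx k with hint'
      have hlen' : int'.length = int.length - 1 := by
        rw [hint', List.length_eraseIdx]
        simp [hklt]
      rw [Finset.mem_sigma]
      constructor
      · rw [hKH, Set.Finite.mem_toFinset]
        refine ⟨huS, huS', int', rfl, ?_, ?_, ?_⟩
        · intro x hx
          have hxint : x ∈ int := (List.eraseIdx_sublist int k).subset hx
          have hxv : x ≠ v := by
            intro e
            subst e
            exact not_mem_eraseIdx_indexOf x int hnd.of_cons hvint hx
          rw [hHverts, Finset.mem_erase]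
          exact ⟨⟨hxv, (hint x hxint).1⟩, (hint x hxint).2⟩
        · exact ((List.eraseIdx_sublist int k).cons₂ u).nodup hnd
        · exact fun h => hni ((List.eraseIdx_sublist int k).subset h)
      · simp only [List.tail_cons, dropLast_append_singleton, Finset.mem_range]
        omega
    · -- backward membership
      rintro ⟨γ, j⟩ hp
      rw [Finset.mem_sigma, hKH, Set.Finite.mem_toFinset] at hp
      obtain ⟨⟨-, -, int, rfl, hint, hnd, hni⟩, hj⟩ := hp
      simp only [List.tail_cons, dropLast_append_singleton, Finset.mem_range] at hj ⊢
      have hjle : j ≤ int.length := by omega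
      have hperm := perm_insertIdx v j int hjle
      have hintv : ∀ x ∈ int, x ∈ G.verts ∧ x ∉ S ∧ x ≠ v := by
        intro x hx
        obtain ⟨hx1, hx2⟩ := hint x hx
        rw [hHverts, Finset.mem_erase] at hx1
        exact ⟨hx1.2, hx2, hx1.1⟩
      rw [Finset.mem_filter, hKG, Set.Finite.mem_toFinset]
      constructor
      · refine ⟨huS, huS', int.insertIdx j v, rfl, ?_, ?_, ?_⟩
        · intro x hx
          rcases List.mem_cons.mp (hperm.subset hx) with e | hx'
          · rw [e]; exact ⟨hv, hvS⟩
          · exact ⟨(hintv x hx').1, (hintv x hx').2.1⟩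
        · rw [(hperm.cons u).nodup_iff, List.nodup_cons, List.nodup_cons]
          refine ⟨?_, ?_, hnd.of_cons⟩
          · intro h
            rcases List.mem_cons.mp h with e | h'
            · exact hvu e
            · exact (List.nodup_cons.mp hnd).1 h'
          · exact fun h => (hintv v h).2.2 rfl
        · intro h
          rcases List.mem_cons.mp (hperm.subset h) with e | h'
          · exact hvu' e
          · exact hni h' 
      · exact List.mem_cons_of_mem _ (List.mem_append_left _ (hperm.mem_iff.mpr (by simp)))
    · -- left inverse
      intro β hβ
      rw [Finset.mem_filter, hKG, Set.Finite.mem_toFinset] at hβ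
      obtain ⟨⟨-, -, int, rfl, hint, hnd, hni⟩, hvm⟩ := hβ
      have hvint : v ∈ int := by
        rcases List.mem_cons.mp hvm with e | hvm'
        · exact absurd e.symm hvu
        rcases List.mem_append.mp hvm' with h | h
        · exact h
        · exact absurd (List.mem_singleton.mp h).symm hvu'
      simp only [List.tail_cons, dropLast_append_singleton]
      rw [insertIdx_indexOf_eraseIdx v int hvint]
    · -- right inverse
      rintro ⟨γ, j⟩ hp
      rw [Finset.mem_sigma, hKH, Set.Finite.mem_toFinset] at hp
      obtain ⟨⟨-, -, int, rfl, hint, hnd, hni⟩, hj⟩ := hp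
      simp only [List.tail_cons, dropLast_append_singleton, Finset.mem_range] at hj ⊢
      have hjle : j ≤ int.length := by omega
      have hvnotint : v ∉ int := fun h => by
        have := (hint v h).1
        rw [hHverts] at this
        exact Finset.notMem_erase v G.verts this
      rw [indexOf_insertIdx v j int hjle hvnotint, List.eraseIdx_insertIdx_self]
    · -- values
      intro β hβ
      rw [Finset.mem_filter, hKG, Set.Finite.mem_toFinset] at hβ
      obtain ⟨⟨-, -, int, rfl, hint, hnd, hni⟩, hvm⟩ := hβ
      have hvint : v ∈ int := by
        rcases List.mem_cons.mp hvm with e | hvm'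
        · exact absurd e.symm hvu
        rcases List.mem_append.mp hvm' with h | h
        · exact h
        · exact absurd (List.mem_singleton.mp h).symm hvu'
      simp only [List.tail_cons, dropLast_append_singleton]
      rw [insertIdx_indexOf_eraseIdx v int hvint]
  rw [hsum1, add_comm]

lemma ext' {G₁ G₂ : WDigraph V} (h1 : G₁.verts = G₂.verts) (h2 : G₁.w = G₂.w) : G₁ = G₂ := by
  cases G₁; cases G₂
  simp only [WDigraph.mk.injEq]
  exact ⟨h1, h2⟩

lemma finsum_mem_subset_singleton {ι M : Type*} [AddCommMonoid M] {x : ι} {A : Set ι}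
    (hA : A ⊆ {x}) (g : ι → M) :
    ∑ᶠ i ∈ A, g i = if x ∈ A then g x else 0 := by
  rcases Set.subset_singleton_iff_eq.mp hA with rfl | rfl
  · simp
  · simp

lemma reduce_self {G : WDigraph V} (hG : G.Wf) : G.reduce G.verts = G := by
  refine ext' rfl ?_
  funext a b
  by_cases ha : a ∈ G.verts
  swap
  · rw [reduce_w_eq_zero _ _ _ _ (Or.inl ha)]
    by_contra hw
    exact ha (hG a b (fun h => hw h.symm)).1
  by_cases hb : b ∈ G.verts
  swap
  · rw [reduce_w_eq_zero _ _ _ _ (Or.inr hb)]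
    by_contra hw
    exact hb (hG a b (fun h => hw h.symm)).2
  show ∑ᶠ β ∈ {β : List V | IsBranch G G.verts a b β}, branchProd G.w β = G.w a b
  have hsub : {β : List V | IsBranch G G.verts a b β} ⊆ {[a, b]} := by
    rintro β ⟨h1, h2, int, rfl, h3, h4, h5, h6⟩
    have : int = [] := List.eq_nil_iff_forall_not_mem.mpr
      (fun x hx => absurd (h3 x hx).1 (h3 x hx).2)
    rw [this]
    rfl
  rw [finsum_mem_subset_singleton hsub]
  split_ifs with h
  · rfl
  · symm
    by_contra hw
    exact h ⟨ha, hb, [], rfl, by simp, by simp, by simp, by simp [List.Chain', hw]⟩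

lemma step_wf {G : WDigraph V} (v : V) : (G.reduce (G.verts.erase v)).Wf := by
  intro a b hw
  by_cases ha : a ∈ G.verts.erase v
  · by_cases hb : b ∈ G.verts.erase v
    · exact ⟨ha, hb⟩
    · exact absurd (reduce_w_eq_zero _ _ _ _ (Or.inr hb)) hw
  · exact absurd (reduce_w_eq_zero _ _ _ _ (Or.inl ha)) hw

lemma step_structural {G : WDigraph V} {S : Finset V} {v : V}
    (hG : G.Wf) (hS : IsStructuralSet G S) (hv : v ∈ G.verts) (hvS : v ∉ S) :
    IsStructuralSet (G.reduce (G.verts.erase v)) S := by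
  set H := G.reduce (G.verts.erase v) with hHdef
  have hHverts : H.verts = G.verts.erase v := rfl
  have hle : ∀ a b, EdgeRel H S a b → Relation.TransGen (EdgeRel G S) a b := by
    rintro a b ⟨haH, hbH, haS, hbS, hab, hw⟩
    rw [hHverts] at haH hbH
    rw [remove_one_w G hv haH hbH] at hw
    by_cases h1 : G.w a b = 0
    · rw [h1, zero_add] at hw
      have h2 : G.w a v ≠ 0 := fun h => hw (by rw [h]; simp)
      have h3 : G.w v b ≠ 0 := fun h => hw (by rw [h]; simp)
      have hav : a ≠ v := (Finset.mem_erase.mp haH).1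
      have hbv : b ≠ v := (Finset.mem_erase.mp hbH).1
      exact (Relation.TransGen.single (rel_of_edge hG haS hvS hav h2)).trans
        (Relation.TransGen.single (rel_of_edge hG hvS hbS (Ne.symm hbv) h3))
    · exact Relation.TransGen.single (rel_of_edge hG haS hbS hab h1)
  refine ⟨hS.1, ?_, ?_, ?_⟩
  · intro x hx
    rw [hHverts]
    exact Finset.mem_erase.mpr ⟨fun e => hvS (e ▸ hx), hS.2.1 hx⟩
  · intro x hT
    have hT' : Relation.TransGen (Relation.TransGen (EdgeRel G S)) x x :=
      Relation.TransGen.mono hle x x hT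
    rw [Relation.transGen_idem] at hT'
    exact noCycle hS x hT'
  · intro x hxH hxS
    rw [hHverts] at hxH
    rw [remove_one_w G hv hxH hxH, loop_prod_zero hG hS hvS hxS (Finset.mem_erase.mp hxH).1,
      zero_div, add_zero]
    exact hS.2.2.2 x (Finset.mem_erase.mp hxH).2 hxS

lemma step_eq {G : WDigraph V} {S : Finset V} {v : V}
    (hG : G.Wf) (hS : IsStructuralSet G S) (hv : v ∈ G.verts) (hvS : v ∉ S) :
    G.reduce S = (G.reduce (G.verts.erase v)).reduce S := by
  refine ext' rfl ?_
  funext u u'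
  exact reduce_reduce_w hG hS hv hvS u u'

lemma main_aux : ∀ (l : List V) (G : WDigraph V), G.Wf → ∀ S : Finset V,
    IsStructuralSet G S → l.Nodup → l.toFinset = G.verts \ S →
    G.reduce S = removeSeq G l
  | [], G, hG, S, hS, _, hl => by
      have hSeq : S = G.verts := by
        refine Finset.Subset.antisymm hS.2.1 (fun x hx => ?_)
        by_contra hxS
        have : x ∈ G.verts \ S := Finset.mem_sdiff.mpr ⟨hx, hxS⟩
        rw [← hl] at this
        simp at this
      rw [hSeq]
      exact reduce_self hG
  | v :: l', G, hG, S, hS, hnd, hl => by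
      have hins : insert v l'.toFinset = G.verts \ S := by rw [← List.toFinset_cons]; exact hl
      have hv : v ∈ G.verts \ S := by rw [← hins]; exact Finset.mem_insert_self v _
      have hvv : v ∈ G.verts := (Finset.mem_sdiff.mp hv).1
      have hvS : v ∉ S := (Finset.mem_sdiff.mp hv).2
      have hvl' : v ∉ l' := (List.nodup_cons.mp hnd).1
      show G.reduce S = removeSeq (G.reduce (G.verts.erase v)) l'
      rw [step_eq hG hS hvv hvS]
      refine main_aux l' _ (step_wf v) S (step_structural hG hS hvv hvS)
        (List.nodup_cons.mp hnd).2 ?_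
      show l'.toFinset = (G.verts.erase v) \ S
      have h1 : l'.toFinset = (insert v l'.toFinset).erase v :=
        (Finset.erase_insert (by simpa using hvl')).symm
      rw [h1, hins]
      ext x
      simp only [Finset.mem_erase, Finset.mem_sdiff]
      tauto
end Lemma4Aux

/-- **Lemma 4.** Let `G ∈ 𝔾_π` with `S ∈ st(G)`. Then for any enumeration (i.e.
any ordering/permutation) `l` of the vertices of `S̄ = V∖S`, the reduction of `G`
over `S` equals the sequential removal of the vertices of `S̄` one at a time in
that order: `R_S(G) = R̄(G; v_{ρ(k)},…,v_{ρ(n)})`. -/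
theorem reduce_eq_removeSeq
    (G : WDigraph V) (hG : G.Wf) (hpi : G.PiNonpos)
    (S : Finset V) (hS : IsStructuralSet G S)
    (l : List V) (hne : l ≠ []) (hnd : l.Nodup) (hl : l.toFinset = G.verts \ S) :
    G.reduce S = removeSeq G l :=
  Lemma4Aux.main_aux l G hG S hS hnd hl
end
end

section
/- Let G ∈ 𝔾_π with vertex set V = {v₁,…,v_n}, n > 2. For any 1 ≤ i < n and any permutation ρ of {1,…,i}, R̄(G; v₁,…,v_i) = R̄(G; v_{ρ(1)},…,v_{ρ(i)}). -/
open scoped Classical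

noncomputable section

variable {V : Type*} [Fintype V] [DecidableEq V]

section Aux
set_option linter.unusedSectionVars false

open RatFunc


/-- `Pnp f`: num degree ≤ denom degree. -/
def Pnp (f : RatFunc ℂ) : Prop := f.num.degree ≤ f.denom.degree

lemma pnp_iff {f : RatFunc ℂ} : Pnp f ↔ f = 0 ∨ f.intDegree ≤ 0 := by
  constructor
  · intro h
    by_cases hf : f = 0
    · exact Or.inl hf
    · right
      have hn : f.num ≠ 0 := RatFunc.num_ne_zero hf
      have hd : f.denom ≠ 0 := f.denom_ne_zero
      rw [Pnp, Polynomial.degree_eq_natDegree hn, Polynomial.degree_eq_natDegree hd] at h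
      have : f.num.natDegree ≤ f.denom.natDegree := by exact_mod_cast h
      simp only [RatFunc.intDegree, sub_nonpos]
      exact_mod_cast this
  · rintro (rfl | h)
    · simp [Pnp]
    · by_cases hf : f = 0
      · simp [hf, Pnp]
      · have hn : f.num ≠ 0 := RatFunc.num_ne_zero hf
        have hd : f.denom ≠ 0 := f.denom_ne_zero
        rw [Pnp, Polynomial.degree_eq_natDegree hn, Polynomial.degree_eq_natDegree hd]
        simp only [RatFunc.intDegree, sub_nonpos] at h
        exact_mod_cast h

lemma pnp_zero : Pnp (0 : RatFunc ℂ) := pnp_iff.2 (Or.inl rfl)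

lemma sub_X_ne_zero {a : RatFunc ℂ} (ha : Pnp a) : RatFunc.X - a ≠ 0 := by
  intro h
  have : a = RatFunc.X := by linear_combination -h
  rcases pnp_iff.1 ha with h0 | hd
  · rw [h0] at this; exact RatFunc.X_ne_zero this.symm
  · rw [this, RatFunc.intDegree_X] at hd; norm_num at hd

lemma intDegree_X_sub {a : RatFunc ℂ} (ha : Pnp a) : (RatFunc.X - a).intDegree = 1 := by
  by_cases h0 : a = 0
  · simp [h0]
  rcases pnp_iff.1 ha with h | hd
  · exact absurd h h0
  have hne : RatFunc.X - a ≠ 0 := sub_X_ne_zero ha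
  have hXa : RatFunc.X - a = RatFunc.X + (-a) := by ring
  have hupper : (RatFunc.X - a).intDegree ≤ 1 := by
    rw [hXa]
    have := RatFunc.intDegree_add_le (x := (RatFunc.X : RatFunc ℂ)) (y := -a)
      (neg_ne_zero.2 h0) (hXa ▸ hne)
    simpa [RatFunc.intDegree_X, RatFunc.intDegree_neg] using this.trans (by
      simp [RatFunc.intDegree_X, RatFunc.intDegree_neg]
      omega)
  have hlower : 1 ≤ (RatFunc.X - a).intDegree := by
    have hX : (RatFunc.X : RatFunc ℂ) = (RatFunc.X - a) + a := by ring
    have := RatFunc.intDegree_add_le (x := RatFunc.X - a) (y := a) h0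
      (by rw [← hX]; exact RatFunc.X_ne_zero)
    rw [← hX, RatFunc.intDegree_X] at this
    rcases max_cases (RatFunc.X - a).intDegree a.intDegree with ⟨he, _⟩ | ⟨he, hlt⟩
    · omega
    · omega
  omega

lemma pnp_mul {a b : RatFunc ℂ} (ha : Pnp a) (hb : Pnp b) : Pnp (a * b) := by
  rcases pnp_iff.1 ha with rfl | hda
  · simpa using pnp_zero
  rcases pnp_iff.1 hb with rfl | hdb
  · simpa using pnp_zero
  by_cases h0 : a = 0
  · simp [h0, pnp_zero]
  by_cases h1 : b = 0
  · simp [h1, pnp_zero]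
  refine pnp_iff.2 (Or.inr ?_)
  rw [RatFunc.intDegree_mul h0 h1]
  omega

lemma pnp_divX {a c : RatFunc ℂ} (ha : Pnp a) (hc : Pnp c) : Pnp (a / (RatFunc.X - c)) := by
  by_cases h0 : a = 0
  · simp [h0, pnp_zero]
  have hXc := sub_X_ne_zero hc
  refine pnp_iff.2 (Or.inr ?_)
  rw [div_eq_mul_inv, RatFunc.intDegree_mul h0 (inv_ne_zero hXc)]
  have hinv : (RatFunc.X - c)⁻¹.intDegree = -1 := by
    have := RatFunc.intDegree_mul hXc (inv_ne_zero hXc)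
    rw [mul_inv_cancel₀ hXc, RatFunc.intDegree_one, intDegree_X_sub hc] at this
    omega
  rcases pnp_iff.1 ha with h | h
  · exact absurd h h0
  omega

lemma pnp_add {a b : RatFunc ℂ} (ha : Pnp a) (hb : Pnp b) : Pnp (a + b) := by
  by_cases hs : a + b = 0
  · rw [hs]; exact pnp_zero
  by_cases h0 : b = 0
  · simpa [h0] using ha
  refine pnp_iff.2 (Or.inr ?_)
  have := RatFunc.intDegree_add_le h0 hs
  rcases pnp_iff.1 ha with rfl | hda
  · rcases pnp_iff.1 hb with rfl | hdb
    · exact absurd rfl h0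
    · simpa using hdb
  rcases pnp_iff.1 hb with rfl | hdb
  · exact absurd rfl h0
  omega

lemma det_ne_zero {a b c : RatFunc ℂ} (ha : Pnp a) (hb : Pnp b) (hc : Pnp c) :
    (RatFunc.X - a) * (RatFunc.X - b) - c ≠ 0 := by
  intro h
  have hceq : c = (RatFunc.X - a) * (RatFunc.X - b) := by linear_combination -h
  have hcne : c ≠ 0 := by
    rw [hceq]; exact mul_ne_zero (sub_X_ne_zero ha) (sub_X_ne_zero hb)
  have : c.intDegree = 2 := by
    rw [hceq, RatFunc.intDegree_mul (sub_X_ne_zero ha) (sub_X_ne_zero hb),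
      intDegree_X_sub ha, intDegree_X_sub hb]
    norm_num
  rcases pnp_iff.1 hc with h0 | hd
  · exact hcne h0
  · omega


variable {V : Type*} [Fintype V] [DecidableEq V]

lemma branchProd_pair (w : V → V → RatFunc ℂ) (a b : V) :
    branchProd w [a, b] = w a b := rfl

lemma branchProd_triple (w : V → V → RatFunc ℂ) (a v b : V) :
    branchProd w [a, v, b] = w a v * w v b / (RatFunc.X - w v v) := rfl

lemma isBranch_erase_iff (G : WDigraph V) {v a b : V} (hv : v ∈ G.verts)
    (ha : a ∈ G.verts.erase v) (hb : b ∈ G.verts.erase v) (β : List V) :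
    IsBranch G (G.verts.erase v) a b β ↔
      (β = [a, b] ∧ G.w a b ≠ 0) ∨ (β = [a, v, b] ∧ G.w a v ≠ 0 ∧ G.w v b ≠ 0) := by
  constructor
  · rintro ⟨-, -, int, rfl, hint, hnd, hvnotin, hchain⟩
    have hintv : ∀ x ∈ int, x = v := by
      intro x hx
      rcases hint x hx with ⟨hx1, hx2⟩
      by_contra hne
      exact hx2 (Finset.mem_erase.2 ⟨hne, hx1⟩)
    have hnd' : int.Nodup := (List.nodup_cons.1 hnd).2
    match int, hintv, hnd' with
    | [], _, _ =>
        left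
        refine ⟨rfl, ?_⟩
        simpa [List.Chain', List.isChain_cons_cons] using hchain
    | [x], h, _ =>
        right
        have hxv : x = v := h x (by simp)
        have hc : G.w a x ≠ 0 ∧ G.w x b ≠ 0 := by
          simpa [List.Chain', List.isChain_cons_cons] using hchain
        rw [hxv] at hc
        exact ⟨by simp [hxv], hc.1, hc.2⟩
    | x :: y :: t, h, hnd2 =>
        exfalso
        have hx := h x (by simp)
        have hy := h y (by simp)
        subst hx
        rw [hy] at hnd2
        simp at hnd2
  · have hane : a ≠ v := (Finset.mem_erase.1 ha).1
    have hbne : b ≠ v := (Finset.mem_erase.1 hb).1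
    rintro (⟨rfl, h⟩ | ⟨rfl, h1, h2⟩)
    · exact ⟨ha, hb, [], rfl, by simp, by simp, by simp,
        by simpa [List.Chain', List.isChain_cons_cons] using h⟩
    · refine ⟨ha, hb, [v], rfl, ?_, ?_, ?_, ?_⟩
      · intro x hx
        simp only [List.mem_singleton] at hx
        subst hx
        exact ⟨hv, Finset.notMem_erase _ _⟩
      · simp [hane]
      · simp [hbne]
      · simp [List.Chain', List.isChain_cons_cons, h1, h2]

lemma reduce_w_zero (G : WDigraph V) {S : Finset V} {a b : V} (h : a ∉ S ∨ b ∉ S) :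
    (G.reduce S).w a b = 0 := by
  show (∑ᶠ β ∈ {β : List V | IsBranch G S a b β}, branchProd G.w β) = 0
  have hempty : {β : List V | IsBranch G S a b β} = ∅ := by
    ext β
    simp only [Set.mem_setOf_eq, Set.mem_empty_iff_false, iff_false]
    rintro ⟨h1, h2, -⟩
    tauto
  rw [hempty, finsum_mem_empty]

lemma reduce_w_eq (G : WDigraph V) {v a b : V} (hv : v ∈ G.verts)
    (ha : a ∈ G.verts.erase v) (hb : b ∈ G.verts.erase v) :
    (G.reduce (G.verts.erase v)).w a b
      = G.w a b + G.w a v * G.w v b / (RatFunc.X - G.w v v) := by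
  show (∑ᶠ β ∈ {β : List V | IsBranch G (G.verts.erase v) a b β}, branchProd G.w β) = _
  have hne12 : ([a, b] : List V) ≠ [a, v, b] := fun h => by
    simpa using congrArg List.length h
  by_cases h1 : G.w a b = 0 <;> by_cases h2 : G.w a v * G.w v b = 0
  · have hset : {β : List V | IsBranch G (G.verts.erase v) a b β} = ∅ := by
      ext β
      simp only [Set.mem_setOf_eq, Set.mem_empty_iff_false, iff_false,
        isBranch_erase_iff G hv ha hb]
      rintro (⟨-, h⟩ | ⟨-, ha1, hb1⟩)
      · exact h h1
      · exact (mul_ne_zero ha1 hb1) h2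
    rw [hset, finsum_mem_empty, h1, h2, zero_div, add_zero]
  · have hav : G.w a v ≠ 0 := fun h => h2 (by rw [h, zero_mul])
    have hvb : G.w v b ≠ 0 := fun h => h2 (by rw [h, mul_zero])
    have hset : {β : List V | IsBranch G (G.verts.erase v) a b β} = {[a, v, b]} := by
      ext β
      simp only [Set.mem_setOf_eq, Set.mem_singleton_iff,
        isBranch_erase_iff G hv ha hb]
      constructor
      · rintro (⟨-, h⟩ | ⟨h, -⟩)
        · exact absurd h1 h
        · exact h
      · rintro rfl
        exact Or.inr ⟨rfl, hav, hvb⟩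
    rw [hset, finsum_mem_singleton, branchProd_triple, h1, zero_add]
  · have hset : {β : List V | IsBranch G (G.verts.erase v) a b β} = {[a, b]} := by
      ext β
      simp only [Set.mem_setOf_eq, Set.mem_singleton_iff,
        isBranch_erase_iff G hv ha hb]
      constructor
      · rintro (⟨h, -⟩ | ⟨-, ha1, hb1⟩)
        · exact h
        · exact absurd h2 (mul_ne_zero ha1 hb1)
      · rintro rfl
        exact Or.inl ⟨rfl, h1⟩
    rw [hset, finsum_mem_singleton, branchProd_pair, h2, zero_div, add_zero]
  · have hav : G.w a v ≠ 0 := fun h => h2 (by rw [h, zero_mul])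
    have hvb : G.w v b ≠ 0 := fun h => h2 (by rw [h, mul_zero])
    have hset : {β : List V | IsBranch G (G.verts.erase v) a b β}
        = {[a, b], [a, v, b]} := by
      ext β
      simp only [Set.mem_setOf_eq, Set.mem_insert_iff, Set.mem_singleton_iff,
        isBranch_erase_iff G hv ha hb]
      constructor
      · rintro (⟨h, -⟩ | ⟨h, -⟩)
        · exact Or.inl h
        · exact Or.inr h
      · rintro (rfl | rfl)
        · exact Or.inl ⟨rfl, h1⟩
        · exact Or.inr ⟨rfl, hav, hvb⟩
    rw [hset, finsum_mem_pair hne12, branchProd_pair, branchProd_triple]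

lemma pnp_reduce_erase (G : WDigraph V) (hpi : G.PiNonpos) {v : V} (hv : v ∈ G.verts) :
    (G.reduce (G.verts.erase v)).PiNonpos := by
  intro a b
  by_cases ha : a ∈ G.verts.erase v
  · by_cases hb : b ∈ G.verts.erase v
    · rw [reduce_w_eq G hv ha hb]
      exact pnp_add (hpi a b) (pnp_divX (pnp_mul (hpi a v) (hpi v b)) (hpi v v))
    · rw [reduce_w_zero G (Or.inr hb)]; exact pnp_zero
  · rw [reduce_w_zero G (Or.inl ha)]; exact pnp_zero

lemma WDigraph.ext' {G H : WDigraph V} (h1 : G.verts = H.verts) (h2 : G.w = H.w) :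
    G = H := by
  cases G; cases H; cases h1; cases h2; rfl

lemma swap_core {wab wax wxb way wyb wxy wyx wxx wyy : RatFunc ℂ}
    (hxx : Pnp wxx) (hyy : Pnp wyy) (hxy : Pnp wxy) (hyx : Pnp wyx) :
    wab + wax * wxb / (RatFunc.X - wxx)
      + (way + wax * wxy / (RatFunc.X - wxx)) * (wyb + wyx * wxb / (RatFunc.X - wxx))
        / (RatFunc.X - (wyy + wyx * wxy / (RatFunc.X - wxx)))
    = wab + way * wyb / (RatFunc.X - wyy)
      + (wax + way * wyx / (RatFunc.X - wyy)) * (wxb + wxy * wyb / (RatFunc.X - wyy))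
        / (RatFunc.X - (wxx + wxy * wyx / (RatFunc.X - wyy))) := by
  set px := RatFunc.X - wxx with hpx_def
  set py := RatFunc.X - wyy with hpy_def
  have hpx : px ≠ 0 := sub_X_ne_zero hxx
  have hpy : py ≠ 0 := sub_X_ne_zero hyy
  have hD : px * py - wxy * wyx ≠ 0 := det_ne_zero hxx hyy (pnp_mul hxy hyx)
  have e1 : RatFunc.X - (wyy + wyx * wxy / px) = (px * py - wxy * wyx) / px := by
    rw [eq_div_iff hpx]
    field_simp
    ring
  have e2 : RatFunc.X - (wxx + wxy * wyx / py) = (px * py - wxy * wyx) / py := by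
    rw [eq_div_iff hpy]
    field_simp
    ring
  rw [e1, e2, div_div_eq_mul_div, div_div_eq_mul_div]
  field_simp
  ring

lemma reduce_swap (G : WDigraph V) (hpi : G.PiNonpos) {x y : V} (hx : x ∈ G.verts)
    (hy : y ∈ G.verts) (hxy : x ≠ y) :
    (G.reduce (G.verts.erase x)).reduce ((G.verts.erase x).erase y)
      = (G.reduce (G.verts.erase y)).reduce ((G.verts.erase y).erase x) := by
  have hyx' : y ∈ G.verts.erase x := Finset.mem_erase.2 ⟨Ne.symm hxy, hy⟩
  have hxy' : x ∈ G.verts.erase y := Finset.mem_erase.2 ⟨hxy, hx⟩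
  apply WDigraph.ext'
  · show (G.verts.erase x).erase y = (G.verts.erase y).erase x
    exact Finset.erase_right_comm (s := G.verts) (a := x) (b := y)
  · funext a b
    by_cases ha : a ∈ (G.verts.erase x).erase y
    · by_cases hb : b ∈ (G.verts.erase x).erase y
      · have ha' : a ∈ (G.verts.erase y).erase x := by
          rw [Finset.erase_right_comm]; exact ha
        have hb' : b ∈ (G.verts.erase y).erase x := by
          rw [Finset.erase_right_comm]; exact hb
        have hax : a ∈ G.verts.erase x := Finset.mem_of_mem_erase ha
        have hbx : b ∈ G.verts.erase x := Finset.mem_of_mem_erase hb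
        have hay : a ∈ G.verts.erase y := Finset.mem_of_mem_erase ha'
        have hby : b ∈ G.verts.erase y := Finset.mem_of_mem_erase hb'
        show ((G.reduce (G.verts.erase x)).reduce
            ((G.reduce (G.verts.erase x)).verts.erase y)).w a b
          = ((G.reduce (G.verts.erase y)).reduce
            ((G.reduce (G.verts.erase y)).verts.erase x)).w a b
        rw [reduce_w_eq (G.reduce (G.verts.erase x)) hyx' ha hb,
            reduce_w_eq (G.reduce (G.verts.erase y)) hxy' ha' hb',
            reduce_w_eq G hx hax hbx, reduce_w_eq G hx hax hyx',
            reduce_w_eq G hx hyx' hbx, reduce_w_eq G hx hyx' hyx',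
            reduce_w_eq G hy hay hby, reduce_w_eq G hy hay hxy',
            reduce_w_eq G hy hxy' hby, reduce_w_eq G hy hxy' hxy']
        exact swap_core (hpi x x) (hpi y y) (hpi x y) (hpi y x)
      · have hb2 : b ∉ (G.verts.erase y).erase x := by
          rw [Finset.erase_right_comm]; exact hb
        rw [reduce_w_zero _ (Or.inr hb), reduce_w_zero _ (Or.inr hb2)]
    · have ha2 : a ∉ (G.verts.erase y).erase x := by
        rw [Finset.erase_right_comm]; exact ha
      rw [reduce_w_zero _ (Or.inl ha), reduce_w_zero _ (Or.inl ha2)]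

lemma removeSeq_perm_aux {l₁ l₂ : List V} (hperm : l₁.Perm l₂) :
    ∀ G : WDigraph V, G.PiNonpos → l₁.Nodup → (∀ x ∈ l₁, x ∈ G.verts) →
      removeSeq G l₁ = removeSeq G l₂ := by
  induction hperm with
  | nil => intro G _ _ _; rfl
  | cons x p IH =>
      intro G hpi hnd hsub
      have hx : x ∈ G.verts := hsub x (by simp)
      show removeSeq (G.reduce (G.verts.erase x)) _
        = removeSeq (G.reduce (G.verts.erase x)) _
      apply IH
      · exact pnp_reduce_erase G hpi hx
      · exact (List.nodup_cons.1 hnd).2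
      · intro z hz
        refine Finset.mem_erase.2 ⟨?_, hsub z (by simp [hz])⟩
        intro h
        rw [h] at hz
        exact (List.nodup_cons.1 hnd).1 hz
  | swap x y l =>
      intro G hpi hnd hsub
      have hx : x ∈ G.verts := hsub x (by simp)
      have hy : y ∈ G.verts := hsub y (by simp)
      have hyx : y ≠ x := by
        simp only [List.nodup_cons, List.mem_cons] at hnd
        tauto
      show removeSeq ((G.reduce (G.verts.erase y)).reduce ((G.verts.erase y).erase x)) l
        = removeSeq ((G.reduce (G.verts.erase x)).reduce ((G.verts.erase x).erase y)) l
      rw [reduce_swap G hpi hy hx hyx]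
  | trans p₁ p₂ IH₁ IH₂ =>
      intro G hpi hnd hsub
      rw [IH₁ G hpi hnd hsub, IH₂ G hpi (p₁.nodup hnd) (fun z hz => hsub z (p₁.symm.subset hz))]

end Aux

/-- **Lemma 5.** Let `G ∈ 𝔾_π` have more than two vertices. For distinct vertices
`v₁,…,v_i` of `G` with `1 ≤ i < n`, removing them sequentially in any order gives
the same graph: `R̄(G;v₁,…,v_i) = R̄(G;v_{ρ(1)},…,v_{ρ(i)})` for any permutation `ρ`. -/
theorem removeSeq_perm
    (G : WDigraph V) (hG : G.Wf) (hpi : G.PiNonpos) (hcard : 2 < G.verts.card)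
    (l₁ l₂ : List V) (hne : l₁ ≠ []) (hnd : l₁.Nodup)
    (hsub : ∀ x ∈ l₁, x ∈ G.verts) (hlt : l₁.length < G.verts.card)
    (hperm : l₁.Perm l₂) :
    removeSeq G l₁ = removeSeq G l₂ :=
  removeSeq_perm_aux hperm G hpi hnd hsub
end
end

section
/- Let 𝒢 = (V,E,ω) with V = {v₂,…,v_n}, n ≥ 3, and suppose e₂₃ ∈ E has weight ω(e₂₃) = ω₂₁ω₁₃/(λ − ω₁₁) for some ω₂₁, ω₁₁, ω₁₃ ∈ 𝕎. Let G̃ be the graph 𝒢 with loop bisected edge e₂₃ with intermediate vertex v₁, i.e., G̃ has vertex set {v₁,…,v_n}, the edge e₂₃ removed, a loop at v₁ of weight ω₁₁, an edge from v₂ to v₁ of weight ω₂₁ and an edge from v₁ to v₃ of weight ω₁₃, all other edges and weights unchanged. Then, as an identity of rational functions in 𝕎, det(M(G̃) − λI) = (ω₁₁ − λ)·det(M(𝒢) − λI). -/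
open scoped Classical

noncomputable section

variable {V : Type*} [Fintype V] [DecidableEq V]

/-- The graph `G` with loop bisected edge `e_{ik}` with (new) intermediate vertex
`none`: the edge `e_{ik}` is deleted and replaced by an edge `i → j` of weight `a`,
a loop at `j` of weight `l`, and an edge `j → k` of weight `b`, where `j = none`
is a new vertex. -/
def loopBisect (G : WDigraph V) (i k : V) (a l b : RatFunc ℂ) : WDigraph (Option V) where
  verts := insert none (G.verts.image some)
  w := fun x y => match x, y with
    | some u, some v => if u = i ∧ v = k then 0 else G.w u v
    | some u, none => if u = i then a else 0
    | none, some v => if v = k then b else 0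
    | none, none => l


/-- (Determinant identity in the proof of Lemma 2.) Let `𝒢 = (V,E,ω)` with at
least two vertices and an edge `e₂₃` of weight `ω₂₁ω₁₃/(λ - ω₁₁)`, and let `G̃` be
`𝒢` with loop bisected edge `e₂₃` with new intermediate vertex `v₁`. Then, as an
identity of rational functions, `det(M(G̃) - λI) = (ω₁₁ - λ)·det(M(𝒢) - λI)`. -/
theorem loopBisect_charDet
    (G : WDigraph V) (hG : G.Wf) (hcard : 2 ≤ G.verts.card)
    (v₂ v₃ : V) (hne : v₂ ≠ v₃) (h₂ : v₂ ∈ G.verts) (h₃ : v₃ ∈ G.verts)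
    (w21 w11 w13 : RatFunc ℂ)
    (hedge : G.w v₂ v₃ ≠ 0)
    (hw : G.w v₂ v₃ = w21 * w13 / (RatFunc.X - w11)) :
    (loopBisect G v₂ v₃ w21 w11 w13).charDet = (w11 - RatFunc.X) * G.charDet := by
  classical
  have h11 : (RatFunc.X : RatFunc ℂ) - w11 ≠ 0 := fun h => hedge (by rw [hw, h, div_zero])
  have h11' : w11 - RatFunc.X ≠ 0 := fun h => h11 (by
    have := neg_eq_zero.mpr h; rw [neg_sub] at this; exact this)
  set Gt := loopBisect G v₂ v₃ w21 w11 w13 with hGt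
  have hnone : (none : Option V) ∈ Gt.verts := Finset.mem_insert_self _ _
  have hsome : ∀ v : V, v ∈ G.verts → (some v : Option V) ∈ Gt.verts := fun v hv =>
    Finset.mem_insert_of_mem (Finset.mem_image_of_mem _ hv)
  have hmem : ∀ v : V, (some v : Option V) ∈ Gt.verts → v ∈ G.verts := by
    intro v h
    rcases Finset.mem_insert.1 h with h | h
    · exact absurd h (by simp)
    · rcases Finset.mem_image.1 h with ⟨u, hu, he⟩
      exact (Option.some.inj he) ▸ hu
  let e : Unit ⊕ {x // x ∈ G.verts} ≃ {x // x ∈ Gt.verts} :=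
  { toFun := fun x => Sum.elim (fun _ => ⟨none, hnone⟩)
      (fun v => ⟨some v.1, hsome v.1 v.2⟩) x
    invFun := fun x => match x with
      | ⟨none, _⟩ => Sum.inl ()
      | ⟨some v, h⟩ => Sum.inr ⟨v, hmem v h⟩
    left_inv := by rintro (⟨⟩ | ⟨v, hv⟩) <;> rfl
    right_inv := by rintro ⟨(_ | v), h⟩ <;> rfl }
  let A : Matrix Unit Unit (RatFunc ℂ) := fun _ _ => w11 - RatFunc.X
  let A' : Matrix Unit Unit (RatFunc ℂ) := fun _ _ => (w11 - RatFunc.X)⁻¹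
  let B : Matrix Unit {x // x ∈ G.verts} (RatFunc ℂ) := fun _ j => if j.1 = v₃ then w13 else 0
  let C : Matrix {x // x ∈ G.verts} Unit (RatFunc ℂ) := fun i _ => if i.1 = v₂ then w21 else 0
  let D : Matrix {x // x ∈ G.verts} {x // x ∈ G.verts} (RatFunc ℂ) := fun i j =>
    (if i.1 = v₂ ∧ j.1 = v₃ then 0 else G.w i.1 j.1) - if i = j then RatFunc.X else 0
  have hA'A : A' * A = 1 := by
    ext i j
    rw [Matrix.mul_apply]
    simp [A, A', Matrix.mul_apply, Matrix.one_apply, inv_mul_cancel₀ h11',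
      eq_iff_true_of_subsingleton]
  have hAA' : A * A' = 1 := by
    ext i j
    rw [Matrix.mul_apply]
    simp [A, A', Matrix.mul_apply, Matrix.one_apply, mul_inv_cancel₀ h11',
      eq_iff_true_of_subsingleton]
  letI : Invertible A := ⟨A', hA'A, hAA'⟩
  have hsub : (Matrix.of fun i j : {x // x ∈ Gt.verts} =>
      Gt.w i.1 j.1 - if i = j then (RatFunc.X : RatFunc ℂ) else 0).submatrix e e
      = Matrix.fromBlocks A B C D := by
    ext i j
    rcases i with i | ⟨vi, hi⟩ <;> rcases j with j | ⟨vj, hj⟩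
    · rw [Matrix.fromBlocks_apply₁₁]; simp [e, hGt, loopBisect, A]
    · rw [Matrix.fromBlocks_apply₁₂]; simp [e, hGt, loopBisect, B]
    · rw [Matrix.fromBlocks_apply₂₁]; simp [e, hGt, loopBisect, C]
    · rw [Matrix.fromBlocks_apply₂₂]; show ((if vi = v₂ ∧ vj = v₃ then 0 else G.w vi vj) - if (⟨some vi, hsome vi hi⟩ : Gt.verts) = ⟨some vj, hsome vj hj⟩ then RatFunc.X else 0) = ((if vi = v₂ ∧ vj = v₃ then 0 else G.w vi vj) - if (⟨vi, hi⟩ : G.verts) = ⟨vj, hj⟩ then RatFunc.X else 0); simp only [Subtype.mk.injEq, Option.some.injEq]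
  have hCB : ∀ i j, (C * ⅟A * B) i j
      = (if i.1 = v₂ then w21 else 0) * (w11 - RatFunc.X)⁻¹ * (if j.1 = v₃ then w13 else 0) := by
    intro i j
    have : ⅟A = A' := rfl
    simp only [this, Matrix.mul_apply]
    simp [this, Matrix.mul_apply, C, A', B, Fintype.sum_unique]
  have hDD : D - C * ⅟A * B = Matrix.of (fun i j : {x // x ∈ G.verts} =>
      G.w i.1 j.1 - if i = j then (RatFunc.X : RatFunc ℂ) else 0) := by
    ext i j
    rw [Matrix.sub_apply, hCB]
    by_cases hi : i.1 = v₂ <;> by_cases hj : j.1 = v₃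
    · have hij : i ≠ j := fun h => hne (by rw [← hi, h, hj])
      have hGw : G.w i.1 j.1 = w21 * w13 / (RatFunc.X - w11) := by rw [hi, hj, hw]
      show ((if (i:V) = v₂ ∧ (j:V) = v₃ then 0 else G.w i.1 j.1) - if i = j then RatFunc.X else 0)
          - (if (i:V) = v₂ then w21 else 0) * (w11 - RatFunc.X)⁻¹ * (if (j:V) = v₃ then w13 else 0)
          = G.w i.1 j.1 - if i = j then RatFunc.X else 0
      rw [if_pos (⟨hi, hj⟩ : (i:V) = v₂ ∧ (j:V) = v₃), if_neg hij, if_pos hi, if_pos hj, hGw]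
      field_simp
      ring
    · simp [D, hi, hj]
    · simp [D, hi, hj]
    · simp [D, hi, hj]
  have : Gt.charDet = (Matrix.fromBlocks A B C D).det := by
    rw [WDigraph.charDet, ← Matrix.det_submatrix_equiv_self e, hsub]
  rw [this, Matrix.det_fromBlocks₁₁, hDD, Matrix.det_unique]
  rfl
end
end

section
/- Let H = (V,E,ω) with V = {v₁,…,v_n}, n ≥ 3, such that e_{1i}, e_{i1} ∉ E for all 2 ≤ i ≤ n (so v₁ has no edges except possibly its loop), ω(e₁₁) = ω(e₂₂), and e₃₂ ∈ E. Let H̃ be the graph obtained from H by replacing the edge e₃₂ by the edge e₃₁ with the same weight, and adding edges e_{1i} with ω(e_{1i}) = ω(e_{2i}) for all 3 ≤ i ≤ n (so that the out-neighborhoods of v₁ and v₂ agree with equal weights). Then det(M(H) − λI) = det(M(H̃) − λI) as rational functions, and hence σ(H) = σ(H̃). -/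
open scoped Classical

noncomputable section

variable {V : Type*} [Fintype V] [DecidableEq V]

set_option maxHeartbeats 1000000 in
set_option synthInstance.maxHeartbeats 400000 in
/-- (The determinant identity in the proof of Lemma 1.) Let `H` have vertices
`v₁,…,v_n`, `n ≥ 3`, with `v₁` incident to no edges other than possibly its loop,
`ω(e₁₁) = ω(e₂₂)`, and `e₃₂ ∈ E`. Let `H̃` be obtained from `H` by replacing `e₃₂`
by `e₃₁` (with the same weight) and giving `v₁` the same out-neighborhood as `v₂`
(with equal weights, towards each vertex other than `v₁, v₂`). Then
`det(M(H) - λI) = det(M(H̃) - λI)` and hence `σ(H) = σ(H̃)`. -/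
theorem branch_separation
    (H : WDigraph V) (hH : H.Wf) (hcard : 3 ≤ H.verts.card)
    (v₁ v₂ v₃ : V) (h12 : v₁ ≠ v₂) (h13 : v₁ ≠ v₃) (h23 : v₂ ≠ v₃)
    (hm1 : v₁ ∈ H.verts) (hm2 : v₂ ∈ H.verts) (hm3 : v₃ ∈ H.verts)
    (hv₁ : ∀ u, u ≠ v₁ → H.w v₁ u = 0 ∧ H.w u v₁ = 0)
    (hloop : H.w v₁ v₁ = H.w v₂ v₂)
    (he32 : H.w v₃ v₂ ≠ 0)
    (H' : WDigraph V)
    (hverts : H'.verts = H.verts)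
    (hw' : H'.w = fun x y =>
      if x = v₃ ∧ y = v₂ then 0
      else if x = v₃ ∧ y = v₁ then H.w v₃ v₂
      else if x = v₁ ∧ y ≠ v₁ ∧ y ≠ v₂ then H.w v₂ y
      else H.w x y) :
    H.charDet = H'.charDet ∧ H.spec = H'.spec := by
  obtain ⟨Vs, w'⟩ := H'
  dsimp only at hverts hw'
  subst hverts
  subst hw'
  have hw12 : H.w v₁ v₂ = 0 := (hv₁ v₂ (Ne.symm h12)).1
  have hw21 : H.w v₂ v₁ = 0 := (hv₁ v₂ (Ne.symm h12)).2
  have hw31 : H.w v₃ v₁ = 0 := (hv₁ v₃ (Ne.symm h13)).2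
  suffices hdet : H.charDet = WDigraph.charDet ⟨H.verts, fun x y =>
      if x = v₃ ∧ y = v₂ then 0
      else if x = v₃ ∧ y = v₁ then H.w v₃ v₂
      else if x = v₁ ∧ y ≠ v₁ ∧ y ≠ v₂ then H.w v₂ y
      else H.w x y⟩ by
    refine ⟨hdet, ?_⟩
    unfold WDigraph.spec
    rw [hdet]
  unfold WDigraph.charDet
  set ι := {x // x ∈ H.verts} with hι
  set i₁ : ι := ⟨v₁, hm1⟩ with hi₁
  set i₂ : ι := ⟨v₂, hm2⟩ with hi₂
  set i₃ : ι := ⟨v₃, hm3⟩ with hi₃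
  have c₁ : (i₁ : V) = v₁ := rfl
  have c₂ : (i₂ : V) = v₂ := rfl
  have c₃ : (i₃ : V) = v₃ := rfl
  have h12' : i₁ ≠ i₂ := fun h => h12 (congrArg Subtype.val h)
  have h13' : i₁ ≠ i₃ := fun h => h13 (congrArg Subtype.val h)
  have h23' : i₂ ≠ i₃ := fun h => h23 (congrArg Subtype.val h)
  set A : Matrix ι ι (RatFunc ℂ) :=
    Matrix.of (fun i j : ι => H.w i.1 j.1 - if i = j then (RatFunc.X : RatFunc ℂ) else 0) with hA
  set B : Matrix ι ι (RatFunc ℂ) :=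
    Matrix.of (fun i j : ι =>
      (if i.1 = v₃ ∧ j.1 = v₂ then 0
      else if i.1 = v₃ ∧ j.1 = v₁ then H.w v₃ v₂
      else if i.1 = v₁ ∧ j.1 ≠ v₁ ∧ j.1 ≠ v₂ then H.w v₂ j.1
      else H.w i.1 j.1) - if i = j then (RatFunc.X : RatFunc ℂ) else 0) with hB
  show A.det = B.det
  have hAij : ∀ a b : ι, A a b =
      H.w a.1 b.1 - if a = b then (RatFunc.X : RatFunc ℂ) else 0 := fun a b => rfl
  have hBij : ∀ a b : ι, B a b =
      (if a.1 = v₃ ∧ b.1 = v₂ then 0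
      else if a.1 = v₃ ∧ b.1 = v₁ then H.w v₃ v₂
      else if a.1 = v₁ ∧ b.1 ≠ v₁ ∧ b.1 ≠ v₂ then H.w v₂ b.1
      else H.w a.1 b.1) - if a = b then (RatFunc.X : RatFunc ℂ) else 0 := fun a b => rfl
  -- entries of A
  have hA11 : A i₁ i₁ = H.w v₂ v₂ - RatFunc.X := by
    rw [hAij, if_pos rfl, c₁, hloop]
  have hAod : ∀ a b : ι, a ≠ b → A a b = H.w a.1 b.1 := by
    intro a b h; rw [hAij, if_neg h, sub_zero]
  have hA1y : ∀ b : ι, b ≠ i₁ → A i₁ b = 0 := by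
    intro b hb
    rw [hAod _ _ (Ne.symm hb), c₁]
    exact (hv₁ b.1 (fun hh => hb (Subtype.ext hh))).1
  have hA31 : A i₃ i₁ = 0 := by
    rw [hAod _ _ (Ne.symm h13'), c₁, c₃, hw31]
  have hA22 : A i₂ i₂ = H.w v₂ v₂ - RatFunc.X := by
    rw [hAij, if_pos rfl, c₂]
  -- entries of B
  have hB11 : B i₁ i₁ = H.w v₂ v₂ - RatFunc.X := by
    rw [hBij, c₁]
    rw [if_neg (fun h => h13 h.1), if_neg (fun h => h13 h.1),
      if_neg (fun h => h.2.1 rfl), if_pos rfl, hloop]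
  have hB12 : B i₁ i₂ = 0 := by
    rw [hBij, c₁, c₂]
    rw [if_neg (fun h => h13 h.1), if_neg (fun h => h13 h.1),
      if_neg (fun h => h.2.2 rfl), if_neg h12', hw12, sub_zero]
  have hB1y : ∀ b : ι, b ≠ i₁ → b ≠ i₂ → B i₁ b = H.w v₂ b.1 := by
    intro b hb1 hb2
    have hb1' : b.1 ≠ v₁ := fun h => hb1 (Subtype.ext h)
    have hb2' : b.1 ≠ v₂ := fun h => hb2 (Subtype.ext h)
    rw [hBij, c₁]
    rw [if_neg (fun h => h13 h.1), if_neg (fun h => h13 h.1),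
      if_pos ⟨rfl, hb1', hb2'⟩, if_neg (fun h => hb1 h.symm), sub_zero]
  have hB2b : ∀ b : ι, B i₂ b = A i₂ b := by
    intro b
    rw [hBij, hAij, c₂]
    rw [if_neg (fun h => h23 h.1), if_neg (fun h => h23 h.1),
      if_neg (fun h => h12 h.1.symm)]
  have hB31 : B i₃ i₁ = H.w v₃ v₂ := by
    rw [hBij, c₁, c₃]
    rw [if_neg (fun h => h12 h.2), if_pos ⟨rfl, rfl⟩,
      if_neg (Ne.symm h13'), sub_zero]
  have hB32 : B i₃ i₂ = 0 := by
    rw [hBij, c₂, c₃]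
    rw [if_pos ⟨rfl, rfl⟩, if_neg (Ne.symm h23'), sub_zero]
  have hB3y : ∀ b : ι, b ≠ i₁ → b ≠ i₂ → B i₃ b = A i₃ b := by
    intro b hb1 hb2
    have hb1' : b.1 ≠ v₁ := fun h => hb1 (Subtype.ext h)
    have hb2' : b.1 ≠ v₂ := fun h => hb2 (Subtype.ext h)
    rw [hBij, hAij, c₃]
    rw [if_neg (fun h => hb2' h.2), if_neg (fun h => hb1' h.2),
      if_neg (fun h => h13 h.1.symm)]
  have hBa : ∀ a b : ι, a ≠ i₁ → a ≠ i₃ → B a b = A a b := by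
    intro a b ha1 ha3
    have ha1' : a.1 ≠ v₁ := fun h => ha1 (Subtype.ext h)
    have ha3' : a.1 ≠ v₃ := fun h => ha3 (Subtype.ext h)
    rw [hBij, hAij]
    rw [if_neg (fun h => ha3' h.1), if_neg (fun h => ha3' h.1),
      if_neg (fun h => ha1' h.1)]
  have hBy1 : ∀ a : ι, a ≠ i₁ → a ≠ i₃ → B a i₁ = 0 := by
    intro a ha1 ha3
    have ha1' : a.1 ≠ v₁ := fun h => ha1 (Subtype.ext h)
    rw [hBa a i₁ ha1 ha3, hAod _ _ ha1, c₁]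
    exact (hv₁ a.1 ha1').2
  have hB21 : B i₂ i₁ = 0 := by
    rw [hB2b, hAod _ _ (Ne.symm h12'), c₁, c₂, hw21]
  -- row operation: row i₁ ← row i₁ - row i₂
  set M : Matrix ι ι (RatFunc ℂ) := B.updateRow i₁ (B i₁ + (-1 : RatFunc ℂ) • B i₂) with hM
  have step1 : M.det = B.det := Matrix.det_updateRow_add_smul_self B h12' _
  have hMij : ∀ a b : ι, M a b = if a = i₁ then B i₁ b - B i₂ b else B a b := by
    intro a b
    by_cases h : a = i₁
    · subst h
      simp [hM, sub_eq_add_neg]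
    · simp [hM, Matrix.updateRow_ne h, h]
  -- column operation: col i₂ ← col i₂ + col i₁
  set C : Matrix ι ι (RatFunc ℂ) :=
    M.updateCol i₂ (fun k => M k i₂ + (1 : RatFunc ℂ) • M k i₁) with hC
  have step2 : C.det = M.det := Matrix.det_updateCol_add_smul_self M (Ne.symm h12') _
  have key : C = A.updateRow i₃ (A i₃ + Pi.single i₁ (H.w v₃ v₂)) := by
    funext i j
    have hCij : C i j = if j = i₂ then M i i₂ + M i i₁ else M i j := by
      by_cases h : j = i₂
      · subst h; simp [hC]
      · simp [hC, Matrix.updateCol_ne h, h]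
    have hRij : A.updateRow i₃ (A i₃ + Pi.single i₁ (H.w v₃ v₂)) i j =
        if i = i₃ then A i₃ j + (if j = i₁ then H.w v₃ v₂ else 0) else A i j := by
      by_cases h : i = i₃
      · subst h
        simp [Matrix.updateRow_self, Pi.single_apply]
      · simp [Matrix.updateRow_ne h, h]
    rw [hCij, hRij]
    by_cases hii1 : i = i₁
    · subst hii1
      rw [if_neg h13']
      by_cases hj2 : j = i₂
      · subst hj2
        rw [if_pos rfl, hMij, hMij, if_pos rfl, if_pos rfl,
          hB12, hB11, hB21, hB2b, hA22, hA1y i₂ (Ne.symm h12')]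
        ring
      · rw [if_neg hj2, hMij, if_pos rfl]
        by_cases hj1 : j = i₁
        · subst hj1
          rw [hB11, hB21, hA11, sub_zero]
        · rw [hB1y j hj1 hj2, hB2b, hAod _ _ (fun h => hj2 h.symm), c₂,
            hA1y j hj1, sub_self]
    · by_cases hii3 : i = i₃
      · subst hii3
        rw [if_pos rfl]
        by_cases hj2 : j = i₂
        · subst hj2
          rw [if_pos rfl, hMij, hMij, if_neg hii1, if_neg hii1,
            hB32, hB31, hAod _ _ (Ne.symm h23'), if_neg (Ne.symm h12'), c₂, c₃,
            zero_add, add_zero]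
        · rw [if_neg hj2, hMij, if_neg hii1]
          by_cases hj1 : j = i₁
          · subst hj1
            rw [hB31, if_pos rfl, hA31, zero_add]
          · rw [hB3y j hj1 hj2, if_neg hj1, add_zero]
      · by_cases hj2 : j = i₂
        · subst hj2
          rw [if_pos rfl, if_neg hii3, hMij, hMij, if_neg hii1, if_neg hii1,
            hBa i i₂ hii1 hii3, hBy1 i hii1 hii3, add_zero]
        · rw [if_neg hj2, if_neg hii3, hMij, if_neg hii1, hBa i j hii1 hii3]
  have hsingle : ∀ c : RatFunc ℂ, (Pi.single i₁ c : ι → RatFunc ℂ) =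
      c • (Pi.single i₁ 1 : ι → RatFunc ℂ) := by
    intro c; funext j; simp [Pi.single_apply]
  have hzero : (A.updateRow i₃ (Pi.single i₁ (H.w v₃ v₂))).det = 0 := by
    set D : Matrix ι ι (RatFunc ℂ) := A.updateRow i₃ (Pi.single i₁ (H.w v₃ v₂)) with hD
    have hDrow1 : D i₁ = Pi.single i₁ (H.w v₂ v₂ - RatFunc.X) := by
      funext j
      rw [hD, Matrix.updateRow_ne h13']
      by_cases h : j = i₁
      · subst h
        rw [hA11, Pi.single_eq_same]
      · rw [Pi.single_eq_of_ne h, hA1y j h]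
    have e1 : D.det = (H.w v₂ v₂ - RatFunc.X) *
        (D.updateRow i₁ (Pi.single i₁ (1 : RatFunc ℂ))).det := by
      conv_lhs => rw [← Matrix.updateRow_eq_self D i₁, hDrow1, hsingle]
      rw [Matrix.det_updateRow_smul]
    set E : Matrix ι ι (RatFunc ℂ) := D.updateRow i₁ (Pi.single i₁ (1 : RatFunc ℂ)) with hE
    have hErow3 : E i₃ = Pi.single i₁ (H.w v₃ v₂) := by
      rw [hE, Matrix.updateRow_ne (Ne.symm h13'), hD, Matrix.updateRow_self]
    have e2 : E.det = (H.w v₃ v₂) *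
        (E.updateRow i₃ (Pi.single i₁ (1 : RatFunc ℂ))).det := by
      conv_lhs => rw [← Matrix.updateRow_eq_self E i₃, hErow3, hsingle]
      rw [Matrix.det_updateRow_smul]
    have e3 : (E.updateRow i₃ (Pi.single i₁ (1 : RatFunc ℂ))).det = 0 := by
      apply Matrix.det_zero_of_row_eq h13'
      rw [Matrix.updateRow_ne h13', Matrix.updateRow_self, hE, Matrix.updateRow_self]
    rw [e1, e2, e3, mul_zero, mul_zero]
  have hfinal : (A.updateRow i₃ (A i₃ + Pi.single i₁ (H.w v₃ v₂))).det = A.det := by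
    rw [Matrix.det_updateRow_add, Matrix.updateRow_eq_self, hzero, add_zero]
  rw [← step1, ← step2, key, hfinal]
end
end
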